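/- arXiv:2305.08480 — 5 statements merged into one kernel-verified Lean document; each statement's English description precedes it below -/
import Mathlib

section
/- For every integer r ≥ 1 and every q ∈ ℂ with q^r ≠ 1, one has 1/(1 − q^r)² = Σ_ζ [ 1/(r²·(1 − ζq)²) + (r − 1)/(r²·(1 − ζq)) ], where the sum runs over all r-th roots of unity ζ in ℂ. -/
open Finset

lemma dvd_small_cases {r m : ℕ} (hr : 1 ≤ r) (hm : m < 2 * r) (hd : r ∣ m) :
    m = 0 ∨ m = r := by
  obtain ⟨c, rfl⟩ := hd
  have hc : c < 2 := by
    by_contra hge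
    push_neg at hge
    have : r * 2 ≤ r * c := Nat.mul_le_mul_left r hge
    omega
  interval_cases c <;> omega

lemma sum_pow_nthRootsFinset_aux (r : ℕ) (hr : 1 ≤ r) (k : ℕ) :
    ∑ ζ ∈ Polynomial.nthRootsFinset r (1 : ℂ), ζ ^ k = if r ∣ k then (r : ℂ) else 0 := by
  have hr0 : r ≠ 0 := by omega
  have : NeZero r := ⟨hr0⟩
  have hω := Complex.isPrimitiveRoot_exp r hr0
  set ω := Complex.exp (2 * Real.pi * Complex.I / r) with hωdef
  have himg : Polynomial.nthRootsFinset r (1 : ℂ) = (Finset.range r).image (ω ^ ·) := by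
    ext x
    rw [Polynomial.mem_nthRootsFinset (by omega : 0 < r), Finset.mem_image]
    constructor
    · intro hx
      obtain ⟨i, hi, rfl⟩ := hω.eq_pow_of_pow_eq_one hx
      exact ⟨i, Finset.mem_range.2 hi, rfl⟩
    · rintro ⟨i, -, rfl⟩
      rw [← pow_mul, mul_comm, pow_mul, hω.pow_eq_one, one_pow]
  rw [himg, Finset.sum_image (fun i hi j hj hij =>
    hω.injOn_pow (by simpa using Finset.mem_range.1 hi) (by simpa using Finset.mem_range.1 hj) hij)]
  simp_rw [← pow_mul, mul_comm _ k, pow_mul]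
  by_cases h : r ∣ k
  · rw [if_pos h]
    have h1 : ω ^ k = 1 := (hω.pow_eq_one_iff_dvd k).2 h
    simp [h1]
  · rw [if_neg h]
    have hne : ω ^ k ≠ 1 := fun hc => h ((hω.pow_eq_one_iff_dvd k).1 hc)
    rw [geom_sum_eq hne, ← pow_mul, mul_comm, pow_mul, hω.pow_eq_one, one_pow, sub_self, zero_div]

/-- For every integer `r ≥ 1` and every `q ∈ ℂ` with `q^r ≠ 1`,
`1/(1 − q^r)² = Σ_ζ [ 1/(r²(1 − ζq)²) + (r − 1)/(r²(1 − ζq)) ]`, the sum running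
over all `r`-th roots of unity `ζ` in `ℂ`. -/
theorem stmt_1 (r : ℕ) (hr : 1 ≤ r) (q : ℂ) (hq : q ^ r ≠ 1) :
    1 / (1 - q ^ r) ^ 2 =
      ∑ ζ ∈ Polynomial.nthRootsFinset r (1 : ℂ),
        (1 / ((r : ℂ) ^ 2 * (1 - ζ * q) ^ 2) +
          ((r : ℂ) - 1) / ((r : ℂ) ^ 2 * (1 - ζ * q))) := by
  have hrC : (r : ℂ) ≠ 0 := Nat.cast_ne_zero.2 (by omega)
  have hqr : (1 : ℂ) - q ^ r ≠ 0 := sub_ne_zero.2 fun h => hq h.symm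
  set T := Polynomial.nthRootsFinset r (1 : ℂ) with hT
  have hmem : ∀ ζ ∈ T, ζ ^ r = 1 := fun ζ hζ =>
    (Polynomial.mem_nthRootsFinset (by omega : 0 < r) (1 : ℂ)).1 hζ
  have hz : ∀ ζ ∈ T, (1 : ℂ) - ζ * q ≠ 0 := by
    intro ζ hζ
    rw [sub_ne_zero]
    intro h
    apply hq
    have h2 : (ζ * q) ^ r = 1 := by rw [← h, one_pow]
    calc q ^ r = ζ ^ r * q ^ r := by rw [hmem ζ hζ, one_mul]
      _ = 1 := by rw [← mul_pow, h2]
  have hgeom : ∀ ζ ∈ T, (1 - ζ * q) * (∑ k ∈ Finset.range r, (ζ * q) ^ k) = 1 - q ^ r := by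
    intro ζ hζ
    have hg := geom_sum_mul (ζ * q) r
    have h2 : (ζ * q) ^ r = q ^ r := by rw [mul_pow, hmem ζ hζ, one_mul]
    linear_combination -hg - h2
  -- rewrite each summand
  have termEq : ∀ ζ ∈ T,
      1 / ((r : ℂ) ^ 2 * (1 - ζ * q) ^ 2) + ((r : ℂ) - 1) / ((r : ℂ) ^ 2 * (1 - ζ * q)) =
        ((∑ k ∈ Finset.range r, (ζ * q) ^ k) ^ 2 +
          ((r : ℂ) - 1) * (1 - q ^ r) * (∑ k ∈ Finset.range r, (ζ * q) ^ k)) /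
        ((r : ℂ) ^ 2 * (1 - q ^ r) ^ 2) := by
    intro ζ hζ
    have hg := hgeom ζ hζ
    have h1 := hz ζ hζ
    have hS : (∑ k ∈ Finset.range r, (ζ * q) ^ k) ≠ 0 := by
      intro h0
      rw [h0, mul_zero] at hg
      exact hqr hg.symm
    rw [← hg]
    field_simp
  rw [Finset.sum_congr rfl termEq, ← Finset.sum_div, Finset.sum_add_distrib, ← Finset.mul_sum]
  -- compute the two sums
  have hsum1 : ∑ ζ ∈ T, ∑ k ∈ Finset.range r, (ζ * q) ^ k = (r : ℂ) := by
    rw [Finset.sum_comm]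
    simp_rw [mul_pow, ← Finset.sum_mul]
    rw [Finset.sum_congr rfl fun k _ => by rw [sum_pow_nthRootsFinset_aux r hr k]]
    rw [Finset.sum_eq_single 0]
    · simp
    · intro k hk hk0
      have : ¬ r ∣ k := by
        have hkr := Finset.mem_range.1 hk
        intro hd
        rcases dvd_small_cases hr (by omega) hd with h | h <;> omega
      simp [this]
    · intro h; exact absurd (Finset.mem_range.2 (by omega)) h
  have hsum2 : ∑ ζ ∈ T, (∑ k ∈ Finset.range r, (ζ * q) ^ k) ^ 2
      = (r : ℂ) + ((r : ℂ) - 1) * (r : ℂ) * q ^ r := by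
    have expand : ∀ ζ : ℂ, (∑ k ∈ Finset.range r, (ζ * q) ^ k) ^ 2
        = ∑ j ∈ Finset.range r, ∑ k ∈ Finset.range r, ζ ^ (j + k) * q ^ (j + k) := by
      intro ζ
      rw [sq, Finset.sum_mul_sum]
      congr 1; ext j; congr 1; ext k
      rw [mul_pow, mul_pow, pow_add, pow_add]; ring
    simp_rw [expand]
    rw [Finset.sum_comm]
    have swap2 : ∀ j : ℕ, ∑ ζ ∈ T, ∑ k ∈ Finset.range r, ζ ^ (j + k) * q ^ (j + k)
        = ∑ k ∈ Finset.range r, (if r ∣ (j + k) then (r : ℂ) else 0) * q ^ (j + k) := by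
      intro j
      rw [Finset.sum_comm]
      congr 1; ext k
      rw [← Finset.sum_mul, sum_pow_nthRootsFinset_aux r hr (j + k)]
    simp_rw [swap2]
    have inner : ∀ j ∈ Finset.range r,
        ∑ k ∈ Finset.range r, (if r ∣ (j + k) then (r : ℂ) else 0) * q ^ (j + k)
          = (r : ℂ) * q ^ (if j = 0 then 0 else r) := by
      intro j hj
      have hjr : j < r := Finset.mem_range.1 hj
      rw [Finset.sum_eq_single (if j = 0 then 0 else r - j)]
      · by_cases h : j = 0
        · subst h; simp
        · rw [if_neg h, if_neg h]
          have hjk : j + (r - j) = r := by omega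
          rw [hjk, if_pos dvd_rfl]
      · intro k hk hne
        have hkr : k < r := Finset.mem_range.1 hk
        have hnd : ¬ r ∣ (j + k) := by
          by_cases h : j = 0
          · rw [if_pos h] at hne
            subst h
            intro hd
            rcases dvd_small_cases hr (by omega) hd with h | h <;> omega
          · rw [if_neg h] at hne
            intro hd
            have hj0 : 0 < j := Nat.pos_of_ne_zero h
            rcases dvd_small_cases hr (by omega) hd with h2 | h2 <;> omega
        rw [if_neg hnd, zero_mul]
      · intro h
        exact absurd (Finset.mem_range.2 (by split_ifs <;> omega)) h
    rw [Finset.sum_congr rfl inner]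
    rw [← Finset.sum_erase_add _ _ (Finset.mem_range.2 (by omega : 0 < r))]
    rw [if_pos rfl, pow_zero, mul_one]
    have hconst : ∀ j ∈ (Finset.range r).erase 0,
        (r : ℂ) * q ^ (if j = 0 then 0 else r) = (r : ℂ) * q ^ r := by
      intro j hj
      rw [if_neg (Finset.ne_of_mem_erase hj)]
    rw [Finset.sum_congr rfl hconst, Finset.sum_const, Finset.card_erase_of_mem
      (Finset.mem_range.2 (by omega : 0 < r)), Finset.card_range, nsmul_eq_mul]
    push_cast [Nat.cast_sub hr]
    ring
  rw [hsum1, hsum2]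
  field_simp
  ring
end

section
/- For every integer r ≥ 1 and every q ∈ ℂ with q^r ≠ 1, one has 1/(1 − q^r)³ = Σ_ζ [ 1/(r³·(1 − ζq)³) + 3(r − 1)/(2r³·(1 − ζq)²) + (2r² − 3r + 1)/(2r³·(1 − ζq)) ], where the sum runs over all r-th roots of unity ζ in ℂ. -/
open Finset Polynomial

lemma aux_sum_root_pow (r : ℕ) (hr : 0 < r) (s : ℕ) :
    ∑ z ∈ Polynomial.nthRootsFinset r (1 : ℂ), z ^ s = if r ∣ s then (r : ℂ) else 0 := by
  obtain ⟨ζ, hζ⟩ : ∃ ζ : ℂ, IsPrimitiveRoot ζ r :=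
    ⟨_, Complex.isPrimitiveRoot_exp r hr.ne'⟩
  have : NeZero r := ⟨hr.ne'⟩
  have himg : Polynomial.nthRootsFinset r (1 : ℂ) = (range r).image (ζ ^ ·) := by
    ext x
    simp only [mem_image, mem_range, Polynomial.mem_nthRootsFinset hr]
    constructor
    · intro hx
      obtain ⟨i, hi, rfl⟩ := hζ.eq_pow_of_pow_eq_one hx
      exact ⟨i, hi, rfl⟩
    · rintro ⟨i, hi, rfl⟩
      rw [← pow_mul, mul_comm, pow_mul, hζ.pow_eq_one, one_pow]
  rw [himg, Finset.sum_image (fun i hi j hj h => hζ.pow_inj (mem_range.mp hi) (mem_range.mp hj) h)]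
  have h1 : ∀ i ∈ range r, (ζ ^ i) ^ s = (ζ ^ s) ^ i := fun i _ => by
    rw [← pow_mul, mul_comm, pow_mul]
  rw [Finset.sum_congr rfl h1]
  by_cases hd : r ∣ s
  · have : ζ ^ s = 1 := (hζ.pow_eq_one_iff_dvd s).mpr hd
    simp [this, hd]
  · rw [geom_sum_eq (fun h => hd ((hζ.pow_eq_one_iff_dvd s).mp h)) r,
      ← pow_mul, mul_comm, pow_mul, hζ.pow_eq_one, one_pow, sub_self, zero_div, if_neg hd]


lemma aux_sum_ite_eq_zero (n : ℕ) (hn : 0 < n) (u : ℂ) :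
    ∑ a ∈ range n, (if a = 0 then u else 0) = u := by
  rw [Finset.sum_ite_eq' (range n) 0 (fun _ => u), if_pos (mem_range.mpr hn)]

lemma aux_sum_ite_zero (n : ℕ) (hn : 0 < n) (u v : ℂ) :
    ∑ a ∈ range n, (if a = 0 then u else v) = u + ((n : ℂ) - 1) * v := by
  have h : ∀ a ∈ range n, (if a = 0 then u else v) = (if a = 0 then u - v else 0) + v :=
    fun a _ => by split_ifs <;> ring
  rw [Finset.sum_congr rfl h, Finset.sum_add_distrib, aux_sum_ite_eq_zero n hn,
    Finset.sum_const, card_range, nsmul_eq_mul]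
  ring

lemma aux_sum_ite_lt (n m : ℕ) (h : m ≤ n) (u v : ℂ) :
    ∑ b ∈ range n, (if b < m then u else v) = (m : ℂ) * u + ((n : ℂ) - (m : ℂ)) * v := by
  rw [range_eq_Ico, ← Finset.sum_Ico_consecutive _ (Nat.zero_le m) h]
  rw [Finset.sum_congr rfl (fun b hb => if_pos (by simpa using (Finset.mem_Ico.mp hb).2)),
    Finset.sum_congr (rfl : Finset.Ico m n = _)
      (fun b hb => if_neg (by simp [Nat.not_lt.mpr (Finset.mem_Ico.mp hb).1])),
    Finset.sum_const, Finset.sum_const, Nat.card_Ico]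
  simp only [Nat.card_Ico, Nat.sub_zero, nsmul_eq_mul]
  push_cast [h]
  ring


lemma aux_unique_dvd (r s : ℕ) (hs : s < 3 * r) (h : r ∣ s) :
    s = 0 ∨ s = r ∨ s = 2 * r := by
  obtain ⟨k, hk⟩ := h
  have hk2 : k ≤ 2 := by nlinarith
  interval_cases k <;> omega

lemma aux_inner2 (r a : ℕ) (hr : 0 < r) (ha : a < r) (q : ℂ) :
    ∑ b ∈ range r, (if r ∣ (a + b) then q ^ (a + b) else 0) = if a = 0 then 1 else q ^ r := by
  rcases Nat.eq_zero_or_pos a with rfl | ha1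
  · rw [if_pos rfl]
    refine (Finset.sum_eq_single_of_mem 0 (mem_range.mpr hr) ?_).trans ?_
    · intro b hb hb0
      rw [Finset.mem_range] at hb
      rw [if_neg]
      intro hd
      rcases aux_unique_dvd r (0 + b) (by omega) hd with h | h | h <;> omega
    · simp
  · rw [if_neg (by omega)]
    refine (Finset.sum_eq_single_of_mem (r - a) (mem_range.mpr (by omega)) ?_).trans ?_
    · intro b hb hb0
      rw [Finset.mem_range] at hb
      rw [if_neg]
      intro hd
      rcases aux_unique_dvd r (a + b) (by omega) hd with h | h | h <;> omega
    · rw [show a + (r - a) = r by omega, if_pos dvd_rfl]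

lemma aux_inner3 (r a b : ℕ) (hr : 0 < r) (ha : a < r) (hb : b < r) (q : ℂ) :
    ∑ c ∈ range r, (if r ∣ (a + b + c) then q ^ (a + b + c) else 0) =
      if a + b = 0 then 1 else if a + b ≤ r then q ^ r else q ^ (2 * r) := by
  rcases Nat.eq_zero_or_pos (a + b) with hab | hab1
  · rw [if_pos hab]
    refine (Finset.sum_eq_single_of_mem 0 (mem_range.mpr hr) ?_).trans ?_
    · intro c hc hc0
      rw [Finset.mem_range] at hc
      rw [if_neg]
      intro hd
      rcases aux_unique_dvd r (a + b + c) (by omega) hd with h | h | h <;> omega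
    · rw [show a + b + 0 = 0 by omega, if_pos (dvd_zero r), pow_zero]
  · rcases le_or_gt (a + b) r with hle | hlt
    · rw [if_neg (by omega), if_pos hle]
      refine (Finset.sum_eq_single_of_mem (r - (a + b)) (mem_range.mpr (by omega)) ?_).trans ?_
      · intro c hc hc0
        rw [Finset.mem_range] at hc
        rw [if_neg]
        intro hd
        rcases aux_unique_dvd r (a + b + c) (by omega) hd with h | h | h <;> omega
      · rw [show a + b + (r - (a + b)) = r by omega, if_pos dvd_rfl]
    · rw [if_neg (by omega), if_neg (by omega)]
      refine (Finset.sum_eq_single_of_mem (2 * r - (a + b)) (mem_range.mpr (by omega)) ?_).trans ?_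
      · intro c hc hc0
        rw [Finset.mem_range] at hc
        rw [if_neg]
        intro hd
        rcases aux_unique_dvd r (a + b + c) (by omega) hd with h | h | h <;> omega
      · rw [show a + b + (2 * r - (a + b)) = 2 * r by omega, if_pos (Dvd.intro_left 2 rfl)]

lemma aux_T1 (r : ℕ) (hr : 0 < r) (q : ℂ) :
    ∑ z ∈ nthRootsFinset r (1 : ℂ), (∑ k ∈ range r, (z * q) ^ k) = (r : ℂ) := by
  calc ∑ z ∈ nthRootsFinset r (1 : ℂ), (∑ k ∈ range r, (z * q) ^ k)
      = ∑ k ∈ range r, ∑ z ∈ nthRootsFinset r (1 : ℂ), z ^ k * q ^ k := by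
        rw [Finset.sum_comm]
        exact Finset.sum_congr rfl fun k _ => Finset.sum_congr rfl fun z _ => by rw [mul_pow]
    _ = ∑ k ∈ range r, (if k = 0 then (r : ℂ) else 0) := by
        refine Finset.sum_congr rfl fun k hk => ?_
        rw [Finset.mem_range] at hk
        rw [← Finset.sum_mul, aux_sum_root_pow r hr k]
        by_cases h : k = 0
        · subst h; simp
        · rw [if_neg h, if_neg (fun hd => h (Nat.eq_zero_of_dvd_of_lt hd hk)), zero_mul]
    _ = (r : ℂ) := aux_sum_ite_eq_zero r hr _

lemma aux_T2 (r : ℕ) (hr : 0 < r) (q : ℂ) :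
    ∑ z ∈ nthRootsFinset r (1 : ℂ), (∑ k ∈ range r, (z * q) ^ k) ^ 2 =
      (r : ℂ) * (1 + ((r : ℂ) - 1) * q ^ r) := by
  have step1 : ∀ z : ℂ, (∑ k ∈ range r, (z * q) ^ k) ^ 2 =
      ∑ a ∈ range r, ∑ b ∈ range r, z ^ (a + b) * q ^ (a + b) := by
    intro z
    rw [sq, Finset.sum_mul_sum]
    exact Finset.sum_congr rfl fun a _ => Finset.sum_congr rfl fun b _ => by
      rw [← pow_add, mul_pow]
  calc ∑ z ∈ nthRootsFinset r (1 : ℂ), (∑ k ∈ range r, (z * q) ^ k) ^ 2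
      = ∑ a ∈ range r, ∑ b ∈ range r, ∑ z ∈ nthRootsFinset r (1 : ℂ), z ^ (a + b) * q ^ (a + b) := by
        rw [show ∑ z ∈ nthRootsFinset r (1 : ℂ), (∑ k ∈ range r, (z * q) ^ k) ^ 2 =
            ∑ z ∈ nthRootsFinset r (1 : ℂ), ∑ a ∈ range r, ∑ b ∈ range r, z ^ (a + b) * q ^ (a + b)
          from Finset.sum_congr rfl fun z _ => step1 z, Finset.sum_comm]
        exact Finset.sum_congr rfl fun a _ => Finset.sum_comm
    _ = ∑ a ∈ range r, ∑ b ∈ range r, (r : ℂ) * (if r ∣ (a + b) then q ^ (a + b) else 0) := by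
        refine Finset.sum_congr rfl fun a _ => Finset.sum_congr rfl fun b _ => ?_
        rw [← Finset.sum_mul, aux_sum_root_pow r hr (a + b)]
        split_ifs <;> ring
    _ = (r : ℂ) * ∑ a ∈ range r, (if a = 0 then 1 else q ^ r) := by
        rw [Finset.mul_sum]
        refine Finset.sum_congr rfl fun a ha => ?_
        rw [← Finset.mul_sum, aux_inner2 r a hr (Finset.mem_range.mp ha) q]
    _ = (r : ℂ) * (1 + ((r : ℂ) - 1) * q ^ r) := by rw [aux_sum_ite_zero r hr]

lemma aux_T3 (r : ℕ) (hr : 0 < r) (q : ℂ) :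
    ∑ z ∈ nthRootsFinset r (1 : ℂ), (∑ k ∈ range r, (z * q) ^ k) ^ 3 =
      (r : ℂ) * ((r : ℂ) * (((r : ℂ) + 1) * q ^ r - q ^ (2 * r)) +
        ((r : ℂ) * ((r : ℂ) - 1) / 2) * (q ^ (2 * r) - q ^ r) +
        (1 - 2 * q ^ r + q ^ (2 * r))) := by
  have step1 : ∀ z : ℂ, (∑ k ∈ range r, (z * q) ^ k) ^ 3 =
      ∑ a ∈ range r, ∑ b ∈ range r, ∑ c ∈ range r, z ^ (a + b + c) * q ^ (a + b + c) := by
    intro z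
    rw [pow_succ, sq, Finset.sum_mul_sum, Finset.sum_mul]
    refine Finset.sum_congr rfl fun a _ => ?_
    rw [Finset.sum_mul]
    refine Finset.sum_congr rfl fun b _ => ?_
    rw [Finset.mul_sum]
    exact Finset.sum_congr rfl fun c _ => by rw [← pow_add, ← pow_add, mul_pow]
  calc ∑ z ∈ nthRootsFinset r (1 : ℂ), (∑ k ∈ range r, (z * q) ^ k) ^ 3
      = ∑ a ∈ range r, ∑ b ∈ range r, ∑ c ∈ range r,
          ∑ z ∈ nthRootsFinset r (1 : ℂ), z ^ (a + b + c) * q ^ (a + b + c) := by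
        rw [show ∑ z ∈ nthRootsFinset r (1 : ℂ), (∑ k ∈ range r, (z * q) ^ k) ^ 3 =
            ∑ z ∈ nthRootsFinset r (1 : ℂ), ∑ a ∈ range r, ∑ b ∈ range r, ∑ c ∈ range r,
              z ^ (a + b + c) * q ^ (a + b + c)
          from Finset.sum_congr rfl fun z _ => step1 z, Finset.sum_comm]
        refine Finset.sum_congr rfl fun a _ => ?_
        rw [Finset.sum_comm]
        exact Finset.sum_congr rfl fun b _ => Finset.sum_comm
    _ = (r : ℂ) * ∑ a ∈ range r, ∑ b ∈ range r,
          ∑ c ∈ range r, (if r ∣ (a + b + c) then q ^ (a + b + c) else 0) := by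
        rw [Finset.mul_sum]
        refine Finset.sum_congr rfl fun a _ => ?_
        rw [Finset.mul_sum]
        refine Finset.sum_congr rfl fun b _ => ?_
        rw [Finset.mul_sum]
        refine Finset.sum_congr rfl fun c _ => ?_
        rw [← Finset.sum_mul, aux_sum_root_pow r hr (a + b + c)]
        split_ifs <;> ring
    _ = (r : ℂ) * ∑ a ∈ range r,
          (if a = 0 then 1 + ((r : ℂ) - 1) * q ^ r
            else ((r : ℂ) - a + 1) * q ^ r + ((a : ℂ) - 1) * q ^ (2 * r)) := by
        congr 1
        refine Finset.sum_congr rfl fun a ha => ?_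
        rw [Finset.mem_range] at ha
        rw [Finset.sum_congr rfl fun b hb =>
          aux_inner3 r a b hr ha (Finset.mem_range.mp hb) q]
        by_cases h : a = 0
        · subst h
          rw [if_pos rfl, ← aux_sum_ite_zero r hr 1 (q ^ r)]
          refine Finset.sum_congr rfl fun b hb => ?_
          rw [Finset.mem_range] at hb
          split_ifs with h1 h2 h3 <;> first | rfl | omega
        · rw [if_neg h]
          have hcast : ((r - a + 1 : ℕ) : ℂ) = (r : ℂ) - a + 1 := by
            rw [Nat.cast_add, Nat.cast_sub ha.le, Nat.cast_one]
          calc ∑ b ∈ range r, (if a + b = 0 then 1 else if a + b ≤ r then q ^ r else q ^ (2 * r))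
              = ∑ b ∈ range r, (if b < r - a + 1 then q ^ r else q ^ (2 * r)) := by
                refine Finset.sum_congr rfl fun b hb => ?_
                rw [Finset.mem_range] at hb
                split_ifs with h1 h2 h3 h4 <;> first | rfl | omega
            _ = ((r - a + 1 : ℕ) : ℂ) * q ^ r + ((r : ℂ) - ((r - a + 1 : ℕ) : ℂ)) * q ^ (2 * r) :=
                aux_sum_ite_lt r (r - a + 1) (by omega) _ _
            _ = ((r : ℂ) - a + 1) * q ^ r + ((a : ℂ) - 1) * q ^ (2 * r) := by
                rw [hcast]; ring
    _ = (r : ℂ) * ((r : ℂ) * (((r : ℂ) + 1) * q ^ r - q ^ (2 * r)) +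
          (∑ a ∈ range r, (a : ℂ)) * (q ^ (2 * r) - q ^ r) + (1 - 2 * q ^ r + q ^ (2 * r))) := by
        congr 1
        calc ∑ a ∈ range r, (if a = 0 then 1 + ((r : ℂ) - 1) * q ^ r
                else ((r : ℂ) - a + 1) * q ^ r + ((a : ℂ) - 1) * q ^ (2 * r))
            = ∑ a ∈ range r, ((((r : ℂ) + 1) * q ^ r - q ^ (2 * r)) +
                (a : ℂ) * (q ^ (2 * r) - q ^ r) +
                (if a = 0 then (1 - 2 * q ^ r + q ^ (2 * r)) else 0)) := by
              refine Finset.sum_congr rfl fun a _ => ?_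
              split_ifs with h
              · subst h; push_cast; ring
              · ring
          _ = _ := by
              rw [Finset.sum_add_distrib, Finset.sum_add_distrib, Finset.sum_const,
                Finset.card_range, ← Finset.sum_mul, aux_sum_ite_eq_zero r hr, nsmul_eq_mul]
    _ = (r : ℂ) * ((r : ℂ) * (((r : ℂ) + 1) * q ^ r - q ^ (2 * r)) +
          ((r : ℂ) * ((r : ℂ) - 1) / 2) * (q ^ (2 * r) - q ^ r) +
          (1 - 2 * q ^ r + q ^ (2 * r))) := by
        have hSa : (∑ a ∈ range r, (a : ℂ)) * 2 = (r : ℂ) * ((r : ℂ) - 1) := by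
          have h4 := congrArg (Nat.cast : ℕ → ℂ) (Finset.sum_range_id_mul_two r)
          push_cast [Nat.cast_sub hr] at h4
          exact h4
        linear_combination (r : ℂ) * (q ^ (2 * r) - q ^ r) / 2 * hSa


lemma aux_frac (R D P : ℂ) (hR : R ≠ 0) (hD : D ≠ 0) (hP : P ≠ 0) :
    1 / (R ^ 3 * D ^ 3) + 3 * (R - 1) / (2 * R ^ 3 * D ^ 2) +
      (2 * R ^ 2 - 3 * R + 1) / (2 * R ^ 3 * D) =
    (2 * P ^ 3 + (3 * (R - 1) * (P * D)) * P ^ 2 +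
      ((2 * R ^ 2 - 3 * R + 1) * (P * D) ^ 2) * P) / (2 * R ^ 3 * (P * D) ^ 3) := by
  have h1 : R ^ 3 * D ^ 3 ≠ 0 := mul_ne_zero (pow_ne_zero 3 hR) (pow_ne_zero 3 hD)
  have h2 : 2 * R ^ 3 * D ^ 2 ≠ 0 :=
    mul_ne_zero (mul_ne_zero two_ne_zero (pow_ne_zero 3 hR)) (pow_ne_zero 2 hD)
  have h3 : 2 * R ^ 3 * D ≠ 0 := mul_ne_zero (mul_ne_zero two_ne_zero (pow_ne_zero 3 hR)) hD
  have h4 : 2 * R ^ 3 * (P * D) ^ 3 ≠ 0 :=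
    mul_ne_zero (mul_ne_zero two_ne_zero (pow_ne_zero 3 hR)) (pow_ne_zero 3 (mul_ne_zero hP hD))
  rw [div_add_div _ _ h1 h2, div_add_div _ _ (mul_ne_zero h1 h2) h3,
    div_eq_div_iff (mul_ne_zero (mul_ne_zero h1 h2) h3) h4]
  ring

/-- For every integer `r ≥ 1` and every `q ∈ ℂ` with `q^r ≠ 1`,
`1/(1 − q^r)³ = Σ_ζ [ 1/(r³(1 − ζq)³) + 3(r − 1)/(2r³(1 − ζq)²)
+ (2r² − 3r + 1)/(2r³(1 − ζq)) ]`, the sum running over all `r`-th roots of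
unity `ζ` in `ℂ`. -/
theorem stmt_2 (r : ℕ) (hr : 1 ≤ r) (q : ℂ) (hq : q ^ r ≠ 1) :
    1 / (1 - q ^ r) ^ 3 =
      ∑ ζ ∈ Polynomial.nthRootsFinset r (1 : ℂ),
        (1 / ((r : ℂ) ^ 3 * (1 - ζ * q) ^ 3) +
          3 * ((r : ℂ) - 1) / (2 * (r : ℂ) ^ 3 * (1 - ζ * q) ^ 2) +
          (2 * (r : ℂ) ^ 2 - 3 * (r : ℂ) + 1) / (2 * (r : ℂ) ^ 3 * (1 - ζ * q))) := by
  have hr0 : 0 < r := hr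
  have hrc : (r : ℂ) ≠ 0 := Nat.cast_ne_zero.mpr hr0.ne'
  have hx : (1 : ℂ) - q ^ r ≠ 0 := sub_ne_zero.mpr (Ne.symm hq)
  symm
  have hterm : ∀ z ∈ nthRootsFinset r (1 : ℂ),
      (1 / ((r : ℂ) ^ 3 * (1 - z * q) ^ 3) +
        3 * ((r : ℂ) - 1) / (2 * (r : ℂ) ^ 3 * (1 - z * q) ^ 2) +
        (2 * (r : ℂ) ^ 2 - 3 * (r : ℂ) + 1) / (2 * (r : ℂ) ^ 3 * (1 - z * q))) =
      (2 * (∑ k ∈ range r, (z * q) ^ k) ^ 3 +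
        (3 * ((r : ℂ) - 1) * (1 - q ^ r)) * (∑ k ∈ range r, (z * q) ^ k) ^ 2 +
        ((2 * (r : ℂ) ^ 2 - 3 * (r : ℂ) + 1) * (1 - q ^ r) ^ 2) *
          (∑ k ∈ range r, (z * q) ^ k)) / (2 * (r : ℂ) ^ 3 * (1 - q ^ r) ^ 3) := by
    intro z hz
    have hz1 : z ^ r = 1 := (mem_nthRootsFinset hr0 1).mp hz
    have hzq : 1 - z * q ≠ 0 := by
      intro h0
      apply hq
      have h1 : z * q = 1 := by linear_combination -h0
      have h2 := congrArg (· ^ r) h1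
      simp only [one_pow] at h2
      rw [mul_pow, hz1, one_mul] at h2
      exact h2
    have hPz : (∑ k ∈ range r, (z * q) ^ k) * (1 - z * q) = 1 - q ^ r := by
      have h3 := geom_sum_mul (z * q) r
      rw [mul_pow, hz1, one_mul] at h3
      linear_combination -h3
    have hPne : (∑ k ∈ range r, (z * q) ^ k) ≠ 0 := fun h0 => hx (by rw [← hPz, h0, zero_mul])
    rw [← hPz]
    exact aux_frac (r : ℂ) (1 - z * q) _ hrc hzq hPne
  rw [Finset.sum_congr rfl hterm, ← Finset.sum_div, Finset.sum_add_distrib,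
    Finset.sum_add_distrib, ← Finset.mul_sum, ← Finset.mul_sum, ← Finset.mul_sum,
    aux_T1 r hr0 q, aux_T2 r hr0 q, aux_T3 r hr0 q,
    div_eq_div_iff (mul_ne_zero (mul_ne_zero two_ne_zero (pow_ne_zero 3 hrc)) (pow_ne_zero 3 hx)) (pow_ne_zero 3 hx)]
  ring
end

section
/- Define a(r, x) := (r − 1)/(1 − x) + 1/(1 − x)². For every integer M ≥ 1, every function g : ℕ → ℂ, and every q ∈ ℂ with q^M ≠ 1, one has Σ_{r ∣ M} (M/r) · g(M/r) · a(r, q^r) = Σ_{r ∣ M} Σ_ζ [ (G₁(M/r) − M^{−2}·G₃(M/r)) / (1 − ζq) + (M^{−2}·G₃(M/r)) / (1 − ζq)² ], where r runs over the positive divisors of M, the inner sum runs over the primitive r-th roots of unity ζ in ℂ, and G_γ(d) := Σ_{k ∣ d} k^γ · g(k) (sum over positive divisors k of d). -/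
open Finset

/-- The multiple-cover function `a(r, x) = (r − 1)/(1 − x) + 1/(1 − x)²`. -/
noncomputable def mcA (r : ℕ) (x : ℂ) : ℂ :=
  ((r : ℂ) - 1) / (1 - x) + 1 / (1 - x) ^ 2

/-- `G_γ(d) = Σ_{k ∣ d} k^γ · g(k)`, sum over positive divisors `k` of `d`. -/
noncomputable def GVsum (g : ℕ → ℂ) (γ : ℤ) (d : ℕ) : ℂ :=
  ∑ k ∈ d.divisors, (k : ℂ) ^ γ * g k

open Polynomial in
lemma sum_pow_nthRoots (r j : ℕ) (hr : 0 < r) :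
    ∑ ζ ∈ nthRootsFinset r (1 : ℂ), ζ ^ j = if r ∣ j then (r : ℂ) else 0 := by
  have : NeZero r := ⟨hr.ne'⟩
  have hω := Complex.isPrimitiveRoot_exp r hr.ne'
  set ω := Complex.exp (2 * Real.pi * Complex.I / r) with hωdef
  have hbij : ∑ ζ ∈ nthRootsFinset r (1 : ℂ), ζ ^ j = ∑ i ∈ range r, ((ω ^ i) ^ j) := by
    refine (Finset.sum_bij (fun i _ => ω ^ i) ?_ ?_ ?_ ?_).symm
    · intro a _
      rw [mem_nthRootsFinset hr (1 : ℂ), ← pow_mul, mul_comm, pow_mul, hω.pow_eq_one, one_pow]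
    · intro a ha b hb hab
      exact hω.pow_inj (mem_range.mp ha) (mem_range.mp hb) hab
    · intro ζ hζ
      obtain ⟨i, hik, hi⟩ := hω.eq_pow_of_pow_eq_one ((mem_nthRootsFinset hr (1 : ℂ)).mp hζ)
      exact ⟨i, mem_range.mpr hik, hi⟩
    · intro a _; rfl
  rw [hbij]
  have hswap : ∀ i, (ω ^ i) ^ j = (ω ^ j) ^ i := fun i => by
    rw [← pow_mul, mul_comm, pow_mul]
  rw [Finset.sum_congr rfl fun i _ => hswap i]
  by_cases hd : r ∣ j
  · rw [if_pos hd]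
    have h1 : ω ^ j = 1 := (hω.pow_eq_one_iff_dvd j).mpr hd
    simp [h1]
  · rw [if_neg hd]
    have h1 : ω ^ j ≠ 1 := fun h => hd ((hω.pow_eq_one_iff_dvd j).mp h)
    have hg := geom_sum_mul (ω ^ j) r
    have hxr : (ω ^ j) ^ r = 1 := by
      rw [← pow_mul, mul_comm, pow_mul, hω.pow_eq_one, one_pow]
    rw [hxr, sub_self] at hg
    exact (mul_eq_zero.mp hg).resolve_right (sub_ne_zero.mpr h1)

open Polynomial in
lemma one_div_one_sub_eq (r : ℕ) (hr : 0 < r) (q ζ : ℂ) (hζ : ζ ∈ nthRootsFinset r (1 : ℂ))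
    (hq : q ^ r ≠ 1) :
    1 / (1 - ζ * q) = (∑ j ∈ range r, (ζ * q) ^ j) / (1 - q ^ r) := by
  have hz : ζ ^ r = 1 := (mem_nthRootsFinset hr (1 : ℂ)).mp hζ
  have key : (1 - ζ * q) * (∑ j ∈ range r, (ζ * q) ^ j) = 1 - q ^ r := by
    have hg := geom_sum_mul (ζ * q) r
    have h2 : (ζ * q) ^ r = q ^ r := by rw [mul_pow, hz, one_mul]
    linear_combination -hg - h2
  have h1x : (1 : ℂ) - q ^ r ≠ 0 := sub_ne_zero.mpr (Ne.symm hq)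
  have h1m : (1 : ℂ) - ζ * q ≠ 0 := by
    intro h
    rw [h, zero_mul] at key
    exact h1x key.symm
  rw [div_eq_div_iff h1m h1x]
  linear_combination -key

open Polynomial in
lemma mcA_eq_sum (r : ℕ) (hr : 0 < r) (q : ℂ) (hq : q ^ r ≠ 1) :
    mcA r (q ^ r) = ∑ ζ ∈ nthRootsFinset r (1 : ℂ),
      ((((r : ℂ) ^ 2 - 1) / (r : ℂ) ^ 2) * (1 / (1 - ζ * q))
        + (1 / (r : ℂ) ^ 2) * (1 / (1 - ζ * q) ^ 2)) := by
  have h1x : (1 : ℂ) - q ^ r ≠ 0 := sub_ne_zero.mpr (Ne.symm hq)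
  have hr0 : (r : ℂ) ≠ 0 := Nat.cast_ne_zero.mpr hr.ne'
  set S : ℂ → ℂ := fun ζ => ∑ j ∈ range r, (ζ * q) ^ j with hSdef
  have step : ∀ ζ ∈ nthRootsFinset r (1 : ℂ),
      ((((r : ℂ) ^ 2 - 1) / (r : ℂ) ^ 2) * (1 / (1 - ζ * q))
        + (1 / (r : ℂ) ^ 2) * (1 / (1 - ζ * q) ^ 2))
      = (((r : ℂ) ^ 2 - 1) / (r : ℂ) ^ 2 / (1 - q ^ r)) * S ζ
        + (1 / (r : ℂ) ^ 2 / (1 - q ^ r) ^ 2) * (S ζ) ^ 2 := by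
    intro ζ hζ
    have h := one_div_one_sub_eq r hr q ζ hζ hq
    have h2 : 1 / (1 - ζ * q) ^ 2 = (S ζ) ^ 2 / (1 - q ^ r) ^ 2 := by
      rw [← div_pow, show (1:ℂ) / (1 - ζ * q) ^ 2 = (1 / (1 - ζ * q)) ^ 2 by
        rw [div_pow, one_pow], h]
    rw [h, h2]
    ring
  rw [Finset.sum_congr rfl step, Finset.sum_add_distrib, ← Finset.mul_sum, ← Finset.mul_sum]
  have hS1 : ∑ ζ ∈ nthRootsFinset r (1 : ℂ), S ζ = (r : ℂ) := by
    have h0 : ∀ ζ ∈ nthRootsFinset r (1 : ℂ), S ζ = ∑ j ∈ range r, ζ ^ j * q ^ j := by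
      intro ζ _; simp [hSdef, mul_pow]
    rw [Finset.sum_congr rfl h0, Finset.sum_comm]
    have inner : ∀ j ∈ range r, ∑ ζ ∈ nthRootsFinset r (1 : ℂ), ζ ^ j * q ^ j
        = if j = 0 then (r : ℂ) else 0 := by
      intro j hj
      rw [← Finset.sum_mul, sum_pow_nthRoots r j hr]
      rcases eq_or_ne j 0 with rfl | hj0
      · simp
      · rw [if_neg hj0, if_neg, zero_mul]
        intro hdvd
        exact hj0 (Nat.eq_zero_of_dvd_of_lt hdvd (mem_range.mp hj))
    rw [Finset.sum_congr rfl inner, Finset.sum_ite_eq' (range r) 0 (fun _ => (r : ℂ))]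
    simp [hr]
  have hS2 : ∑ ζ ∈ nthRootsFinset r (1 : ℂ), (S ζ) ^ 2
      = (r : ℂ) + ((r : ℂ) ^ 2 - r) * q ^ r := by
    have expand : ∀ ζ ∈ nthRootsFinset r (1 : ℂ), (S ζ) ^ 2
        = ∑ j ∈ range r, ∑ k ∈ range r, ζ ^ (j + k) * q ^ (j + k) := by
      intro ζ _
      rw [sq, hSdef, Finset.sum_mul_sum]
      refine Finset.sum_congr rfl fun j _ => Finset.sum_congr rfl fun k _ => ?_
      rw [← pow_add, mul_pow]
    rw [Finset.sum_congr rfl expand, Finset.sum_comm]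
    have inner2 : ∀ j ∈ range r,
        ∑ ζ ∈ nthRootsFinset r (1 : ℂ), ∑ k ∈ range r, ζ ^ (j + k) * q ^ (j + k)
        = if j = 0 then (r : ℂ) else (r : ℂ) * q ^ r := by
      intro j hj
      rw [Finset.sum_comm]
      have perk : ∀ k ∈ range r, ∑ ζ ∈ nthRootsFinset r (1 : ℂ), ζ ^ (j + k) * q ^ (j + k)
          = (if r ∣ (j + k) then (r : ℂ) else 0) * q ^ (j + k) := by
        intro k _
        rw [← Finset.sum_mul, sum_pow_nthRoots r (j + k) hr]
      rw [Finset.sum_congr rfl perk]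
      rcases eq_or_ne j 0 with rfl | hj0
      · rw [if_pos rfl]
        have h0 : ∀ k ∈ range r, (if r ∣ (0 + k) then (r : ℂ) else 0) * q ^ (0 + k)
            = if k = 0 then (r : ℂ) else 0 := by
          intro k hk
          rcases eq_or_ne k 0 with rfl | hk0
          · simp
          · rw [if_neg hk0, if_neg, zero_mul]
            intro hdvd
            exact hk0 (Nat.eq_zero_of_dvd_of_lt (by simpa using hdvd) (mem_range.mp hk))
        rw [Finset.sum_congr rfl h0, Finset.sum_ite_eq' (range r) 0 (fun _ => (r : ℂ))]
        simp [hr]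
      · rw [if_neg hj0]
        have hjr : j < r := mem_range.mp hj
        have hjpos : 0 < j := Nat.pos_of_ne_zero hj0
        rw [Finset.sum_eq_single_of_mem (r - j) (mem_range.mpr (by omega))]
        · have hjk : j + (r - j) = r := by omega
          rw [hjk, if_pos dvd_rfl]
        · intro k hk hkne
          rw [if_neg, zero_mul]
          rintro ⟨c, hc⟩
          have hkr : k < r := mem_range.mp hk
          have h1 : r * c < r * 2 := by omega
          have hcc : c < 2 := Nat.lt_of_mul_lt_mul_left h1
          have hc0 : c ≠ 0 := by rintro rfl; omega
          have hc1 : c = 1 := by omega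
          rw [hc1, mul_one] at hc
          omega
    rw [Finset.sum_congr rfl inner2]
    have split : ∀ j ∈ range r, (if j = 0 then (r : ℂ) else (r : ℂ) * q ^ r)
        = (r : ℂ) * q ^ r + (if j = 0 then (r : ℂ) - (r : ℂ) * q ^ r else 0) := by
      intro j _
      rcases eq_or_ne j 0 with rfl | hj0
      · simp
      · simp [hj0]
    rw [Finset.sum_congr rfl split, Finset.sum_add_distrib, Finset.sum_const, card_range,
      Finset.sum_ite_eq' (range r) 0 (fun _ => (r : ℂ) - (r : ℂ) * q ^ r)]
    simp only [if_pos (mem_range.mpr hr), nsmul_eq_mul]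
    ring
  rw [hS1, hS2, mcA]
  field_simp
  ring

/-- Partial fraction expansion of the `a`-part. -/
theorem stmt_4 (M : ℕ) (hM : 1 ≤ M) (g : ℕ → ℂ) (q : ℂ) (hq : q ^ M ≠ 1) :
    ∑ r ∈ M.divisors, ((M / r : ℕ) : ℂ) * g (M / r) * mcA r (q ^ r) =
      ∑ r ∈ M.divisors, ∑ ζ ∈ primitiveRoots r ℂ,
        ((GVsum g 1 (M / r) - (M : ℂ) ^ (-2 : ℤ) * GVsum g 3 (M / r)) / (1 - ζ * q) +
          ((M : ℂ) ^ (-2 : ℤ) * GVsum g 3 (M / r)) / (1 - ζ * q) ^ 2) := by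
  classical
  have hM0 : M ≠ 0 := by omega
  have hMC : (M : ℂ) ≠ 0 := Nat.cast_ne_zero.mpr hM0
  have hL : ∀ r ∈ M.divisors, ((M / r : ℕ) : ℂ) * g (M / r) * mcA r (q ^ r)
      = ∑ d ∈ r.divisors, ∑ ζ ∈ primitiveRoots d ℂ,
          (((M / r : ℕ) : ℂ) * g (M / r) *
            ((((r : ℂ) ^ 2 - 1) / (r : ℂ) ^ 2) * (1 / (1 - ζ * q))
              + (1 / (r : ℂ) ^ 2) * (1 / (1 - ζ * q) ^ 2))) := by
    intro r hr
    obtain ⟨hrM, -⟩ := Nat.mem_divisors.mp hr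
    have hrpos : 0 < r := Nat.pos_of_mem_divisors hr
    have hqr : q ^ r ≠ 1 := by
      intro h
      apply hq
      rcases hrM with ⟨c, rfl⟩
      rw [pow_mul, h, one_pow]
    have hω := Complex.isPrimitiveRoot_exp r hrpos.ne'
    rw [mcA_eq_sum r hrpos q hqr, Finset.mul_sum,
      IsPrimitiveRoot.nthRoots_one_eq_biUnion_primitiveRoots, Finset.sum_biUnion]
    intro i _ j _ hij
    exact IsPrimitiveRoot.disjoint hij
  rw [Finset.sum_congr rfl hL]
  rw [Finset.sum_comm'
    (s' := fun d => M.divisors.filter (fun r => d ∣ r)) (t' := M.divisors)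
    (fun r d => by
      constructor
      · rintro ⟨hrM, hdr⟩
        rw [Nat.mem_divisors] at hrM hdr
        exact ⟨Finset.mem_filter.mpr ⟨Nat.mem_divisors.mpr hrM, hdr.1⟩,
          Nat.mem_divisors.mpr ⟨hdr.1.trans hrM.1, hrM.2⟩⟩
      · rintro ⟨hrf, _⟩
        obtain ⟨hrM, hdr⟩ := Finset.mem_filter.mp hrf
        exact ⟨hrM, Nat.mem_divisors.mpr ⟨hdr,
          (Nat.pos_of_mem_divisors hrM).ne'⟩⟩)]
  refine Finset.sum_congr rfl fun d hd => ?_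
  rw [Finset.sum_comm]
  refine Finset.sum_congr rfl fun ζ hζ => ?_
  obtain ⟨hdM, -⟩ := Nat.mem_divisors.mp hd
  have hNd : M / d ∣ M := Nat.div_dvd_of_dvd hdM
  have hNd0 : M / d ≠ 0 := by
    intro h
    apply hM0
    rw [← Nat.div_mul_cancel hdM, h, zero_mul]
  have key : ∑ r ∈ M.divisors.filter (fun r => d ∣ r),
      (((M / r : ℕ) : ℂ) * g (M / r) *
        ((((r : ℂ) ^ 2 - 1) / (r : ℂ) ^ 2) * (1 / (1 - ζ * q))
          + (1 / (r : ℂ) ^ 2) * (1 / (1 - ζ * q) ^ 2)))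
      = ∑ k ∈ (M / d).divisors,
      (((M / (M / k) : ℕ) : ℂ) * g (M / (M / k)) *
        (((((M / k : ℕ) : ℂ)) ^ 2 - 1) / (((M / k : ℕ) : ℂ)) ^ 2 * (1 / (1 - ζ * q))
          + (1 / (((M / k : ℕ) : ℂ)) ^ 2) * (1 / (1 - ζ * q) ^ 2))) := by
    refine Finset.sum_nbij' (fun r => M / r) (fun k => M / k) ?_ ?_ ?_ ?_ ?_
    · intro r hr
      obtain ⟨hrM, hdr⟩ := Finset.mem_filter.mp hr
      obtain ⟨hrdvd, -⟩ := Nat.mem_divisors.mp hrM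
      refine Nat.mem_divisors.mpr ⟨?_, hNd0⟩
      refine (Nat.dvd_div_iff_mul_dvd hdM).mpr ?_
      calc d * (M / r) ∣ r * (M / r) := mul_dvd_mul_right hdr _
        _ = M := Nat.mul_div_cancel' hrdvd
    · intro k hk
      obtain ⟨hkNd, -⟩ := Nat.mem_divisors.mp hk
      have hkM : k ∣ M := hkNd.trans hNd
      refine Finset.mem_filter.mpr ⟨Nat.mem_divisors.mpr ⟨Nat.div_dvd_of_dvd hkM, hM0⟩, ?_⟩
      refine (Nat.dvd_div_iff_mul_dvd hkM).mpr ?_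
      rw [mul_comm]
      exact (Nat.dvd_div_iff_mul_dvd hdM).mp hkNd
    · intro r hr
      obtain ⟨hrM, -⟩ := Finset.mem_filter.mp hr
      exact Nat.div_div_self (Nat.mem_divisors.mp hrM).1 hM0
    · intro k hk
      obtain ⟨hkNd, -⟩ := Nat.mem_divisors.mp hk
      exact Nat.div_div_self (hkNd.trans hNd) hM0
    · intro r hr
      obtain ⟨hrM, -⟩ := Finset.mem_filter.mp hr
      rw [Nat.div_div_self (Nat.mem_divisors.mp hrM).1 hM0]
  rw [key]
  have hc2 : (M : ℂ) ^ (-2 : ℤ) = 1 / (M : ℂ) ^ 2 := by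
    rw [show (-2 : ℤ) = -((2 : ℕ) : ℤ) by norm_num, zpow_neg, zpow_natCast, one_div]
  have expand : ∀ k ∈ (M / d).divisors,
      (((M / (M / k) : ℕ) : ℂ) * g (M / (M / k)) *
        (((((M / k : ℕ) : ℂ)) ^ 2 - 1) / (((M / k : ℕ) : ℂ)) ^ 2 * (1 / (1 - ζ * q))
          + (1 / (((M / k : ℕ) : ℂ)) ^ 2) * (1 / (1 - ζ * q) ^ 2)))
      = ((k : ℂ) ^ (1 : ℤ) * g k) * (1 / (1 - ζ * q))
        - ((M : ℂ) ^ (-2 : ℤ) * ((k : ℂ) ^ (3 : ℤ) * g k)) * (1 / (1 - ζ * q))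
        + ((M : ℂ) ^ (-2 : ℤ) * ((k : ℂ) ^ (3 : ℤ) * g k)) * (1 / (1 - ζ * q) ^ 2) := by
    intro k hk
    obtain ⟨hkNd, -⟩ := Nat.mem_divisors.mp hk
    have hkM : k ∣ M := hkNd.trans hNd
    have hk0 : k ≠ 0 := (Nat.pos_of_mem_divisors hk).ne'
    have hkC : (k : ℂ) ≠ 0 := Nat.cast_ne_zero.mpr hk0
    rw [Nat.div_div_self hkM hM0, Nat.cast_div hkM hkC, hc2, zpow_one,
      show (3 : ℤ) = ((3 : ℕ) : ℤ) by norm_num, zpow_natCast]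
    have hMk : (M : ℂ) / (k : ℂ) ≠ 0 := div_ne_zero hMC hkC
    set u := 1 / (1 - ζ * q) with hu
    set v := 1 / (1 - ζ * q) ^ 2 with hv
    field_simp
  rw [Finset.sum_congr rfl expand, Finset.sum_add_distrib, Finset.sum_sub_distrib,
    ← Finset.sum_mul, ← Finset.sum_mul, ← Finset.sum_mul]
  simp only [GVsum, ← Finset.mul_sum]
  ring
end

section
/- Define c(r, q, τ) := τ/(r(1 − q)(1 − q^r)) + (e^τ − 1 − τ)/(r²(1 − q)²). For every integer M ≥ 1, every function g : ℕ → ℂ, every τ ∈ ℂ, and every q ∈ ℂ with q^M ≠ 1, one has (1 − q) · Σ_{r ∣ M} (M/r) · g(M/r) · c(r, q, (M/r)·τ) = M^{−2} · ( Σ_{k ∣ M} k³ (e^{kτ} − 1) g(k) ) / (1 − q) + τ · M^{−2} · Σ_{r ∣ M, r ≥ 2} Σ_ζ G₄(M/r) / (1 − ζq), where r runs over the positive divisors of M, the inner sum runs over the primitive r-th roots of unity ζ in ℂ, and G₄(d) := Σ_{k ∣ d} k⁴ · g(k) (sum over positive divisors k of d). -/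
open Finset
open Polynomial

lemma charSum (r j : ℕ) (hr : 0 < r) (hj : j < r) :
    ∑ ζ ∈ nthRootsFinset r (1 : ℂ), ζ ^ j = if j = 0 then (r : ℂ) else 0 := by
  obtain ⟨μ, hμ⟩ : ∃ μ : ℂ, IsPrimitiveRoot μ r := ⟨_, Complex.isPrimitiveRoot_exp r hr.ne'⟩
  have himg : nthRootsFinset r (1 : ℂ) = (range r).image (μ ^ ·) := by
    symm
    apply Finset.eq_of_subset_of_card_le
    · intro x hx
      simp only [mem_image, mem_range] at hx
      obtain ⟨i, hi, rfl⟩ := hx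
      exact (mem_nthRootsFinset hr (1 : ℂ)).2
        (by rw [← pow_mul, mul_comm, pow_mul, hμ.pow_eq_one, one_pow])
    · rw [hμ.card_nthRootsFinset, Finset.card_image_of_injOn, card_range]
      intro i hi j hj' hij
      simp only [Finset.mem_coe, mem_range] at hi hj'
      exact hμ.pow_inj hi hj' hij
  rw [himg, Finset.sum_image
    (fun i hi j hj' hij => hμ.pow_inj (mem_range.1 hi) (mem_range.1 hj') hij)]
  by_cases h0 : j = 0
  · simp [h0]
  · rw [if_neg h0]
    have hc : ∀ i ∈ range r, (μ ^ i) ^ j = (μ ^ j) ^ i := fun i _ => by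
      rw [← pow_mul, mul_comm, pow_mul]
    rw [Finset.sum_congr rfl hc,
      geom_sum_eq (hμ.pow_ne_one_of_pos_of_lt h0 hj),
      ← pow_mul, mul_comm, pow_mul, hμ.pow_eq_one, one_pow, sub_self, zero_div]

lemma rootSum (r : ℕ) (hr : 0 < r) (q : ℂ) (hq : q ^ r ≠ 1) :
    ∑ ζ ∈ nthRootsFinset r (1 : ℂ), (1 - ζ * q)⁻¹ = r / (1 - q ^ r) := by
  have h1 : (1 : ℂ) - q ^ r ≠ 0 := sub_ne_zero.2 (Ne.symm hq)
  have key : ∀ ζ ∈ nthRootsFinset r (1 : ℂ),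
      (1 - ζ * q)⁻¹ = (∑ j ∈ range r, ζ ^ j * q ^ j) / (1 - q ^ r) := by
    intro ζ hζ
    have hζr : ζ ^ r = 1 := (mem_nthRootsFinset hr (1 : ℂ)).1 hζ
    have hne : (1 : ℂ) - ζ * q ≠ 0 := by
      intro h
      have h2 : ζ * q = 1 := (sub_eq_zero.mp h).symm
      have h3 : (ζ * q) ^ r = 1 := by rw [h2, one_pow]
      rw [mul_pow, hζr, one_mul] at h3
      exact hq h3
    have hgeom := geom_sum_mul (ζ * q) r
    simp only [mul_pow, hζr, one_mul] at hgeom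
    rw [inv_eq_one_div, div_eq_div_iff hne h1]
    linear_combination hgeom
  rw [Finset.sum_congr rfl key, ← Finset.sum_div, Finset.sum_comm]
  congr 1
  have : ∀ j ∈ range r, ∑ ζ ∈ nthRootsFinset r (1 : ℂ), ζ ^ j * q ^ j
      = if j = 0 then (r : ℂ) else 0 := by
    intro j hj
    rw [← Finset.sum_mul, charSum r j hr (mem_range.1 hj)]
    split
    · next h => simp [h]
    · simp
  rw [Finset.sum_congr rfl this, Finset.sum_ite_eq' (range r) 0 (fun _ => (r : ℂ))]
  simp [hr]

lemma divisor_swap (M : ℕ) (f : ℕ → ℕ → ℂ) :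
    ∑ r ∈ M.divisors, ∑ d ∈ r.divisors, f d (M / r)
      = ∑ d ∈ M.divisors, ∑ k ∈ (M / d).divisors, f d k := by
  rw [Finset.sum_sigma', Finset.sum_sigma']
  apply Finset.sum_nbij' (i := fun p => (⟨p.2, M / p.1⟩ : Σ _ : ℕ, ℕ))
    (j := fun p => (⟨M / p.2, p.1⟩ : Σ _ : ℕ, ℕ))
  · rintro ⟨r, d⟩ hp
    simp only [Finset.mem_sigma, Nat.mem_divisors] at hp ⊢
    obtain ⟨⟨hrM, hM0⟩, hdr, hr0⟩ := hp
    have hdM : d ∣ M := hdr.trans hrM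
    refine ⟨⟨hdM, hM0⟩, ?_, (Nat.div_ne_zero_iff_of_dvd hdM).2 ⟨hM0, fun h => hr0 (by simpa [h] using hdr)⟩⟩
    obtain ⟨e, rfl⟩ := hdr
    obtain ⟨s, rfl⟩ := hrM
    have hd0 : 0 < d := Nat.pos_of_ne_zero (fun h => hr0 (by simp [h]))
    rw [Nat.mul_div_cancel_left s (Nat.pos_of_ne_zero hr0), Nat.mul_assoc,
      Nat.mul_div_cancel_left _ hd0]
    exact dvd_mul_left _ _
  · rintro ⟨d, k⟩ hp
    simp only [Finset.mem_sigma, Nat.mem_divisors] at hp ⊢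
    obtain ⟨⟨hdM, hM0⟩, hkMd, hMd0⟩ := hp
    have hkM : k ∣ M := hkMd.trans (Nat.div_dvd_of_dvd hdM)
    have hk0 : k ≠ 0 := fun h => hMd0 (by simpa [h] using hkMd)
    refine ⟨⟨Nat.div_dvd_of_dvd hkM, hM0⟩, ?_, (Nat.div_ne_zero_iff_of_dvd hkM).2 ⟨hM0, hk0⟩⟩
    -- d ∣ M / k
    obtain ⟨t, ht⟩ := hkMd
    have : M = k * (d * t) := by
      rw [← Nat.mul_assoc, Nat.mul_comm k d, Nat.mul_assoc, ← ht, Nat.mul_div_cancel' hdM]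
    rw [this, Nat.mul_div_cancel_left _ (Nat.pos_of_ne_zero hk0)]
    exact Dvd.intro t rfl
  · rintro ⟨r, d⟩ hp
    simp only [Finset.mem_sigma, Nat.mem_divisors] at hp
    obtain ⟨⟨hrM, hM0⟩, _, _⟩ := hp
    simp [Nat.div_div_self hrM hM0]
  · rintro ⟨d, k⟩ hp
    simp only [Finset.mem_sigma, Nat.mem_divisors] at hp
    obtain ⟨⟨hdM, hM0⟩, hkMd, hMd0⟩ := hp
    have hkM : k ∣ M := hkMd.trans (Nat.div_dvd_of_dvd hdM)
    simp [Nat.div_div_self hkM hM0]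
  · rintro ⟨r, d⟩ hp
    rfl

lemma nth_eq_sum_prim (r : ℕ) (hr : r ≠ 0) (F : ℂ → ℂ) :
    ∑ ζ ∈ nthRootsFinset r (1 : ℂ), F ζ = ∑ d ∈ r.divisors, ∑ ζ ∈ primitiveRoots d ℂ, F ζ := by
  rw [IsPrimitiveRoot.nthRoots_one_eq_biUnion_primitiveRoots,
    Finset.sum_biUnion]
  exact fun i _ j _ hij => IsPrimitiveRoot.disjoint hij


/-- The multiple-cover function
`c(r, q, τ) = τ/(r(1 − q)(1 − q^r)) + (e^τ − 1 − τ)/(r²(1 − q)²)`. -/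
noncomputable def mcC (r : ℕ) (q τ : ℂ) : ℂ :=
  τ / ((r : ℂ) * (1 - q) * (1 - q ^ r)) +
    (Complex.exp τ - 1 - τ) / ((r : ℂ) ^ 2 * (1 - q) ^ 2)

/-- `G₄(d) = Σ_{k ∣ d} k⁴ · g(k)`, sum over positive divisors `k` of `d`. -/
noncomputable def GVsum4 (g : ℕ → ℂ) (d : ℕ) : ℂ :=
  ∑ k ∈ d.divisors, (k : ℂ) ^ 4 * g k

set_option maxHeartbeats 1000000 in
/-- Partial fraction expansion of the `c`-part:
`(1 − q)·Σ_{r ∣ M} (M/r)·g(M/r)·c(r, q, (M/r)τ)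
  = M⁻²·(Σ_{k ∣ M} k³(e^{kτ} − 1)g(k))/(1 − q)
    + τ·M⁻²·Σ_{r ∣ M, r ≥ 2} Σ_ζ G₄(M/r)/(1 − ζq)`,
the inner sum running over the primitive `r`-th roots of unity `ζ` in `ℂ`. -/
theorem stmt_6 (M : ℕ) (hM : 1 ≤ M) (g : ℕ → ℂ) (τ : ℂ) (q : ℂ) (hq : q ^ M ≠ 1) :
    (1 - q) * ∑ r ∈ M.divisors, ((M / r : ℕ) : ℂ) * g (M / r) * mcC r q (((M / r : ℕ) : ℂ) * τ) =
      (M : ℂ) ^ (-2 : ℤ) *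
          (∑ k ∈ M.divisors, (k : ℂ) ^ 3 * (Complex.exp ((k : ℂ) * τ) - 1) * g k) / (1 - q) +
        τ * (M : ℂ) ^ (-2 : ℤ) *
          ∑ r ∈ M.divisors.filter (fun r => 2 ≤ r), ∑ ζ ∈ primitiveRoots r ℂ,
            GVsum4 g (M / r) / (1 - ζ * q) := by
  have hM0 : M ≠ 0 := by omega
  have hMC : (M : ℂ) ≠ 0 := Nat.cast_ne_zero.2 hM0
  have hq1 : (1 : ℂ) - q ≠ 0 := sub_ne_zero.2 (fun h => hq (by rw [← h, one_pow]))
  set P : ℕ → ℂ := fun d => ∑ ζ ∈ primitiveRoots d ℂ, (1 - ζ * q)⁻¹ with hP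
  set Minv : ℂ := ((M : ℂ) ^ 2)⁻¹ with hMinv
  have hzpow : (M : ℂ) ^ (-2 : ℤ) = Minv := by
    rw [hMinv, zpow_neg]; norm_cast
  -- step 1 : per-term expansion
  have step1 : ∀ r ∈ M.divisors,
      (1 - q) * (((M / r : ℕ) : ℂ) * g (M / r) * mcC r q (((M / r : ℕ) : ℂ) * τ))
        = τ * (Minv * (((M / r : ℕ) : ℂ) ^ 4 * g (M / r) * ∑ d ∈ r.divisors, P d))
          + Minv * (((M / r : ℕ) : ℂ) ^ 3 * g (M / r)
              * (Complex.exp (((M / r : ℕ) : ℂ) * τ) - 1 - ((M / r : ℕ) : ℂ) * τ)) / (1 - q) := by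
    intro r hr
    obtain ⟨hrM, -⟩ := Nat.mem_divisors.1 hr
    have hr0 : r ≠ 0 := (Nat.pos_of_mem_divisors hr).ne'
    have hqr : q ^ r ≠ 1 := by
      intro h
      obtain ⟨s, rfl⟩ := hrM
      exact hq (by rw [pow_mul, h, one_pow])
    have hqrne : (1 : ℂ) - q ^ r ≠ 0 := sub_ne_zero.2 (Ne.symm hqr)
    have hrC : (r : ℂ) ≠ 0 := Nat.cast_ne_zero.2 hr0
    have hk0 : ((M / r : ℕ) : ℂ) ≠ 0 :=
      Nat.cast_ne_zero.2 ((Nat.div_ne_zero_iff_of_dvd hrM).2 ⟨hM0, hr0⟩)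
    have hkC : ((M / r : ℕ) : ℂ) * (r : ℂ) = (M : ℂ) := by
      rw [← Nat.cast_mul, Nat.div_mul_cancel hrM]
    have hroot : ∑ d ∈ r.divisors, P d = r / (1 - q ^ r) := by
      rw [hP, ← nth_eq_sum_prim r hr0, rootSum r (Nat.pos_of_ne_zero hr0) q hqr]
    rw [mcC, hroot, hMinv, ← hkC]
    generalize g (M / r) = G
    generalize ((M / r : ℕ) : ℂ) = k at hk0 ⊢
    generalize (r : ℂ) = R at hrC ⊢
    generalize Complex.exp (k * τ) = E
    field_simp
  rw [Finset.mul_sum, Finset.sum_congr rfl step1, Finset.sum_add_distrib]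
  -- the B part : reindex k = M / r
  have hB : (∑ r ∈ M.divisors, Minv * (((M / r : ℕ) : ℂ) ^ 3 * g (M / r)
        * (Complex.exp (((M / r : ℕ) : ℂ) * τ) - 1 - ((M / r : ℕ) : ℂ) * τ)) / (1 - q))
      = Minv * ((∑ k ∈ M.divisors, (k : ℂ) ^ 3 * (Complex.exp ((k : ℂ) * τ) - 1) * g k)
          - τ * GVsum4 g M) / (1 - q) := by
    rw [Nat.sum_div_divisors M (fun k => Minv * ((k : ℂ) ^ 3 * g k
      * (Complex.exp ((k : ℂ) * τ) - 1 - (k : ℂ) * τ)) / (1 - q)), ← Finset.sum_div]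
    congr 1
    simp only [GVsum4, Finset.mul_sum, mul_sub, ← Finset.sum_sub_distrib]
    exact Finset.sum_congr rfl fun k _ => by ring
  rw [hB]
  -- the A part : swap divisor sums
  have hA : (∑ r ∈ M.divisors, τ * (Minv * (((M / r : ℕ) : ℂ) ^ 4 * g (M / r)
        * ∑ d ∈ r.divisors, P d)))
      = τ * Minv * ∑ d ∈ M.divisors, GVsum4 g (M / d) * P d := by
    calc (∑ r ∈ M.divisors, τ * (Minv * (((M / r : ℕ) : ℂ) ^ 4 * g (M / r)
          * ∑ d ∈ r.divisors, P d)))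
        = ∑ r ∈ M.divisors, ∑ d ∈ r.divisors,
            τ * Minv * (((M / r : ℕ) : ℂ) ^ 4 * g (M / r) * P d) := by
          simp only [Finset.mul_sum]
          exact Finset.sum_congr rfl fun r _ => Finset.sum_congr rfl fun d _ => by ring
      _ = ∑ d ∈ M.divisors, ∑ k ∈ (M / d).divisors,
            τ * Minv * ((k : ℂ) ^ 4 * g k * P d) :=
          divisor_swap M (fun d k => τ * Minv * ((k : ℂ) ^ 4 * g k * P d))
      _ = τ * Minv * ∑ d ∈ M.divisors, GVsum4 g (M / d) * P d := by
          simp only [GVsum4, Finset.mul_sum, Finset.sum_mul]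
  rw [hA, hzpow]
  -- split off the d = 1 term
  have h1 : M.divisors.filter (fun r => ¬ 2 ≤ r) = {1} := by
    ext d
    simp only [Finset.mem_filter, Nat.mem_divisors, Finset.mem_singleton]
    constructor
    · rintro ⟨⟨hd, -⟩, h2⟩
      have : d ≠ 0 := by rintro rfl; exact hM0 (Nat.eq_zero_of_zero_dvd hd)
      omega
    · rintro rfl
      exact ⟨⟨one_dvd M, hM0⟩, by omega⟩
  have hsplit : ∑ d ∈ M.divisors, GVsum4 g (M / d) * P d
      = GVsum4 g M * (1 - q)⁻¹
        + ∑ r ∈ M.divisors.filter (fun r => 2 ≤ r), GVsum4 g (M / r) * P r := by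
    rw [← Finset.sum_filter_add_sum_filter_not M.divisors (fun r => 2 ≤ r)
      (fun d => GVsum4 g (M / d) * P d), h1, add_comm]
    congr 1
    rw [Finset.sum_singleton, Nat.div_one]
    congr 1
    simp [hP, IsPrimitiveRoot.primitiveRoots_one]
  have hR : ∀ r ∈ M.divisors.filter (fun r => 2 ≤ r),
      (∑ ζ ∈ primitiveRoots r ℂ, GVsum4 g (M / r) / (1 - ζ * q))
        = GVsum4 g (M / r) * P r := by
    intro r _
    rw [hP, Finset.mul_sum]
    exact Finset.sum_congr rfl fun ζ _ => div_eq_mul_inv _ _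
  rw [Finset.sum_congr rfl hR, hsplit]
  field_simp
  ring
end

section
/- Let F = ℚ(q) be the field of rational functions in one variable q over ℚ, and let A := F[P, T]/((1 − P)², (1 − PT)²(1 − T)). Then for every integer r ≥ 1 the elements q, PT and 1 − P·q^r are invertible in A, the element 1 − q^r is invertible in F, and the following identity holds in A: (1 − PT)² · ∏_{m=1}^{r−1}(1 − PT·q^m)² · ( (PT)^{2r} · q^{r(r−1)} · ∏_{m=1}^{r}(1 − P·q^m)² )^{−1} = ( Σ_{i=1}^{r−1} i·q^{−r(r−i)} )·(1 − PT)² + ( Σ_{i=1}^{r−1} i(2r − i + 1)·q^{−r(r−i)} )·(1 − PT)³ + ((1 − PT)² + (1 − PT)³)·( (r − 1)/(1 − q^r) + 1/(1 − q^r)² ) + (1 − PT)³·( (r² − 1)/(1 − q^r) + 3/(1 − q^r)² − 2/(1 − q^r)³ ). -/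
open Finset

/-- The field `F = ℚ(q)` of rational functions in one variable over `ℚ`. -/
abbrev Fq : Type := RatFunc ℚ

/-- The ideal `((1 − P)², (1 − PT)²(1 − T))` in `F[P, T]`, with `P = X 0`,
`T = X 1`. -/
noncomputable def relIdeal : Ideal (MvPolynomial (Fin 2) Fq) :=
  Ideal.span
    {(1 - MvPolynomial.X 0) ^ 2,
      (1 - MvPolynomial.X 0 * MvPolynomial.X 1) ^ 2 * (1 - MvPolynomial.X 1)}

/-- The ring `A = F[P, T]/((1 − P)², (1 − PT)²(1 − T))`. -/
noncomputable abbrev Aring : Type := MvPolynomial (Fin 2) Fq ⧸ relIdeal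

/-- The class `P ∈ A`. -/
noncomputable def Pcl : Aring := Ideal.Quotient.mk relIdeal (MvPolynomial.X 0)

/-- The class `T ∈ A`. -/
noncomputable def Tcl : Aring := Ideal.Quotient.mk relIdeal (MvPolynomial.X 1)

/-- The element `q ∈ A`, image of the rational-function variable `q ∈ F`. -/
noncomputable def qcl : Aring := algebraMap Fq Aring RatFunc.X

private lemma hu2 : (1 - Pcl) ^ 2 = 0 := by
  have h : Ideal.Quotient.mk relIdeal ((1 - MvPolynomial.X 0) ^ 2) = 0 :=
    Ideal.Quotient.eq_zero_iff_mem.mpr (Ideal.subset_span (by simp))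
  simpa only [map_pow, map_sub, map_one, Pcl] using h

private lemma hvrel : (1 - Pcl * Tcl) ^ 2 * (1 - Tcl) = 0 := by
  have h : Ideal.Quotient.mk relIdeal
      ((1 - MvPolynomial.X 0 * MvPolynomial.X 1) ^ 2 * (1 - MvPolynomial.X 1)) = 0 :=
    Ideal.Quotient.eq_zero_iff_mem.mpr (Ideal.subset_span (by simp))
  simpa only [map_pow, map_sub, map_one, map_mul, Pcl, Tcl] using h

private lemma hv3 : (1 - Pcl * Tcl) ^ 3 = (1 - Pcl) * (1 - Pcl * Tcl) ^ 2 := by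
  linear_combination Pcl * hvrel

private lemma huv3 : (1 - Pcl) * (1 - Pcl * Tcl) ^ 3 = 0 := by
  linear_combination ((1 - Pcl) * Pcl) * hvrel + (1 - Pcl * Tcl) ^ 2 * hu2

private lemma hv4 : (1 - Pcl * Tcl) ^ 4 = 0 := by
  linear_combination ((1 - Pcl * Tcl + 1 - Pcl) * Pcl) * hvrel + (1 - Pcl * Tcl) ^ 2 * hu2
private lemma expand_prod (x y e : Aring) (hex : e * x = y) (hey : e * y = 0)
    (c d : ℕ → Fq) (hc : ∀ m, 1 ≤ m → c m ≠ 0) (n : ℕ) :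
    x * ∏ m ∈ Icc 1 n,
        (algebraMap Fq Aring (c m) + algebraMap Fq Aring (d m) * e) ^ 2
      = algebraMap Fq Aring (∏ m ∈ Icc 1 n, c m ^ 2) * x
        + algebraMap Fq Aring
            ((∏ m ∈ Icc 1 n, c m ^ 2) * ∑ m ∈ Icc 1 n, 2 * d m / c m) * y := by
  induction n with
  | zero => simp
  | succ k ih =>
    rw [Finset.prod_Icc_succ_top (Nat.le_add_left 1 k),
      Finset.prod_Icc_succ_top (Nat.le_add_left 1 k),
      Finset.sum_Icc_succ_top (Nat.le_add_left 1 k), ← mul_assoc, ih]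
    have hkey : (∏ m ∈ Icc 1 k, c m ^ 2) * c (k+1) ^ 2 *
        ((∑ m ∈ Icc 1 k, 2 * d m / c m) + 2 * d (k+1) / c (k+1))
        = ((∏ m ∈ Icc 1 k, c m ^ 2) * ∑ m ∈ Icc 1 k, 2 * d m / c m) * c (k+1) ^ 2
          + (∏ m ∈ Icc 1 k, c m ^ 2) * (2 * c (k+1) * d (k+1)) := by
      have h := hc (k+1) (Nat.le_add_left 1 k)
      field_simp
    rw [hkey]
    simp only [map_add, map_mul, map_pow, map_ofNat]
    linear_combination
      (2 * algebraMap Fq Aring (∏ m ∈ Icc 1 k, c m ^ 2) * algebraMap Fq Aring (c (k+1))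
          * algebraMap Fq Aring (d (k+1))
        + algebraMap Fq Aring (∏ m ∈ Icc 1 k, c m ^ 2) * algebraMap Fq Aring (d (k+1)) ^ 2 * e)
        * hex
      + (algebraMap Fq Aring (∏ m ∈ Icc 1 k, c m ^ 2) * algebraMap Fq Aring (d (k+1)) ^ 2
        + 2 * algebraMap Fq Aring (∏ m ∈ Icc 1 k, c m ^ 2)
            * algebraMap Fq Aring (∑ m ∈ Icc 1 k, 2 * d m / c m)
            * algebraMap Fq Aring (c (k+1)) * algebraMap Fq Aring (d (k+1))
        + algebraMap Fq Aring (∏ m ∈ Icc 1 k, c m ^ 2)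
            * algebraMap Fq Aring (∑ m ∈ Icc 1 k, 2 * d m / c m)
            * algebraMap Fq Aring (d (k+1)) ^ 2 * e) * hey

private lemma sumA (t : Fq) (n : ℕ) :
    (1 - t) ^ 2 * ∑ i ∈ Icc 1 n, (i : Fq) * t ^ i
      = t - ((n : Fq) + 1) * t ^ (n + 1) + (n : Fq) * t ^ (n + 2) := by
  induction n with
  | zero => simp
  | succ k ih =>
    rw [Finset.sum_Icc_succ_top (Nat.le_add_left 1 k)]
    push_cast
    push_cast at ih
    linear_combination ih

private lemma sumB (t : Fq) (n : ℕ) :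
    (1 - t) ^ 3 * ∑ i ∈ Icc 1 n, (i : Fq) ^ 2 * t ^ i
      = t + t ^ 2 - ((n : Fq) + 1) ^ 2 * t ^ (n + 1)
        + (2 * (n : Fq) ^ 2 + 2 * n - 1) * t ^ (n + 2) - (n : Fq) ^ 2 * t ^ (n + 3) := by
  induction n with
  | zero => simp
  | succ k ih =>
    rw [Finset.sum_Icc_succ_top (Nat.le_add_left 1 k)]
    push_cast
    push_cast at ih
    linear_combination ih

private lemma X_pow_ne_one (m : ℕ) (hm : 1 ≤ m) : (RatFunc.X : Fq) ^ m ≠ 1 := by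
  intro h
  have h2 : (Polynomial.X : Polynomial ℚ) ^ m = 1 := by
    apply RatFunc.algebraMap_injective ℚ
    simpa [map_pow, RatFunc.algebraMap_X] using h
  have := congrArg Polynomial.natDegree h2
  simp [Polynomial.natDegree_X_pow] at this
  omega

private lemma one_sub_X_pow_ne (m : ℕ) (hm : 1 ≤ m) : (1 : Fq) - RatFunc.X ^ m ≠ 0 :=
  sub_ne_zero.mpr (Ne.symm (X_pow_ne_one m hm))

private lemma hpow2 (k : ℕ) :
    (1 - Pcl * Tcl) ^ 2 * (Pcl * Tcl) ^ k
      = (1 - Pcl * Tcl) ^ 2 - (k : Aring) * (1 - Pcl * Tcl) ^ 3 := by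
  induction k with
  | zero => simp
  | succ k ih =>
    rw [pow_succ (Pcl * Tcl) k, ← mul_assoc, ih]
    push_cast
    linear_combination (k : Aring) * hv4

private lemma hpow3 (k : ℕ) :
    (1 - Pcl * Tcl) ^ 3 * (Pcl * Tcl) ^ k = (1 - Pcl * Tcl) ^ 3 := by
  induction k with
  | zero => simp
  | succ k ih =>
    rw [pow_succ (Pcl * Tcl) k, ← mul_assoc, ih]
    linear_combination -hv4

private lemma unit_one_sub_P_q (m : ℕ) (hm : 1 ≤ m) : IsUnit (1 - Pcl * qcl ^ m) := by
  have hc : (1 : Fq) - RatFunc.X ^ m ≠ 0 := one_sub_X_pow_ne m hm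
  have hq : qcl ^ m = algebraMap Fq Aring (RatFunc.X ^ m) := (map_pow _ _ _).symm
  apply IsUnit.of_mul_eq_one
    (algebraMap Fq Aring ((1 - RatFunc.X ^ m)⁻¹)
      - algebraMap Fq Aring (RatFunc.X ^ m * (1 - RatFunc.X ^ m)⁻¹ * (1 - RatFunc.X ^ m)⁻¹)
        * (1 - Pcl))
  have h1 : (1 - algebraMap Fq Aring (RatFunc.X ^ m))
      * algebraMap Fq Aring ((1 - RatFunc.X ^ m)⁻¹) = 1 := by
    rw [show (1 : Aring) - algebraMap Fq Aring (RatFunc.X ^ m)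
        = algebraMap Fq Aring (1 - RatFunc.X ^ m) by rw [map_sub, map_one],
      ← map_mul, mul_inv_cancel₀ hc, map_one]
  rw [hq]
  simp only [map_mul]
  linear_combination
    (1 - (1 - Pcl) * algebraMap Fq Aring (RatFunc.X ^ m)
        * algebraMap Fq Aring ((1 - RatFunc.X ^ m)⁻¹)) * h1
    - algebraMap Fq Aring (RatFunc.X ^ m) ^ 2
        * algebraMap Fq Aring ((1 - RatFunc.X ^ m)⁻¹) ^ 2 * hu2

local notation "Φ" => algebraMap Fq Aring
local notation "qX" => (RatFunc.X : Fq)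

set_option maxHeartbeats 1000000 in
private lemma final_step (n : ℕ) (s₂ s₃ : Fq)
    (K1 : (∏ m ∈ Icc 1 n, (1 - qX ^ m) ^ 2)
        = s₂ * (qX ^ ((n + 1) * n) * ∏ m ∈ Icc 1 (n + 1), (1 - qX ^ m) ^ 2))
    (K2 : (∏ m ∈ Icc 1 n, (1 - qX ^ m) ^ 2)
          * ∑ m ∈ Icc 1 n, 2 * qX ^ m / (1 - qX ^ m)
        = s₂ * (qX ^ ((n + 1) * n)
              * ((∏ m ∈ Icc 1 (n + 1), (1 - qX ^ m) ^ 2)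
                * ∑ m ∈ Icc 1 (n + 1), 2 * qX ^ m / (1 - qX ^ m)))
            - ((2 * (n + 1) : ℕ) : Fq)
                * (s₂ * (qX ^ ((n + 1) * n) * ∏ m ∈ Icc 1 (n + 1), (1 - qX ^ m) ^ 2))
            + s₃ * (qX ^ ((n + 1) * n) * ∏ m ∈ Icc 1 (n + 1), (1 - qX ^ m) ^ 2)) :
    (1 - Pcl * Tcl) ^ 2 * (∏ m ∈ Icc 1 n, (1 - Pcl * Tcl * qcl ^ m) ^ 2)
      = (Φ s₂ * (1 - Pcl * Tcl) ^ 2 + Φ s₃ * (1 - Pcl * Tcl) ^ 3)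
        * ((Pcl * Tcl) ^ (2 * (n + 1)) * qcl ^ ((n + 1) * n)
          * ∏ m ∈ Icc 1 (n + 1), (1 - Pcl * qcl ^ m) ^ 2) := by
  have hfac1 : ∏ m ∈ Icc 1 n, (1 - Pcl * Tcl * qcl ^ m) ^ 2
      = ∏ m ∈ Icc 1 n, (Φ (1 - qX ^ m) + Φ (qX ^ m) * (1 - Pcl * Tcl)) ^ 2 := by
    refine Finset.prod_congr rfl fun m hm => ?_
    rw [show qcl ^ m = Φ (qX ^ m) from (map_pow _ _ _).symm, map_sub, map_one]
    ring_nf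
  have hfac2 : ∏ m ∈ Icc 1 (n + 1), (1 - Pcl * qcl ^ m) ^ 2
      = ∏ m ∈ Icc 1 (n + 1), (Φ (1 - qX ^ m) + Φ (qX ^ m) * (1 - Pcl)) ^ 2 := by
    refine Finset.prod_congr rfl fun m hm => ?_
    rw [show qcl ^ m = Φ (qX ^ m) from (map_pow _ _ _).symm, map_sub, map_one]
    ring_nf
  rw [hfac1, hfac2]
  have e1 := expand_prod ((1 - Pcl * Tcl) ^ 2) ((1 - Pcl * Tcl) ^ 3) (1 - Pcl * Tcl)
    (by ring) (by linear_combination hv4)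
    (fun m => 1 - qX ^ m) (fun m => qX ^ m) one_sub_X_pow_ne n
  have e2 := expand_prod ((1 - Pcl * Tcl) ^ 2) ((1 - Pcl * Tcl) ^ 3) (1 - Pcl)
    hv3.symm huv3 (fun m => 1 - qX ^ m) (fun m => qX ^ m) one_sub_X_pow_ne (n + 1)
  have e3 := expand_prod ((1 - Pcl * Tcl) ^ 3) 0 (1 - Pcl)
    huv3 (mul_zero _) (fun m => 1 - qX ^ m) (fun m => qX ^ m) one_sub_X_pow_ne (n + 1)
  rw [mul_zero, add_zero] at e3
  have hq2 : qcl ^ ((n + 1) * n) = Φ (qX ^ ((n + 1) * n)) := (map_pow _ _ _).symm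
  have K1' : Φ (∏ m ∈ Icc 1 n, (1 - qX ^ m) ^ 2)
      = Φ s₂ * (Φ (qX ^ ((n + 1) * n)) * Φ (∏ m ∈ Icc 1 (n + 1), (1 - qX ^ m) ^ 2)) := by
    rw [← map_mul, ← map_mul, ← K1]
  have K2' := congrArg (algebraMap Fq Aring) K2
  simp only [map_mul, map_sub, map_add, map_natCast] at K2'
  calc (1 - Pcl * Tcl) ^ 2
        * ∏ m ∈ Icc 1 n, (Φ (1 - qX ^ m) + Φ (qX ^ m) * (1 - Pcl * Tcl)) ^ 2
      = Φ (∏ m ∈ Icc 1 n, (1 - qX ^ m) ^ 2) * (1 - Pcl * Tcl) ^ 2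
        + Φ ((∏ m ∈ Icc 1 n, (1 - qX ^ m) ^ 2)
            * ∑ m ∈ Icc 1 n, 2 * qX ^ m / (1 - qX ^ m)) * (1 - Pcl * Tcl) ^ 3 := e1
    _ = Φ s₂ * (Φ (qX ^ ((n + 1) * n))
            * (Φ (∏ m ∈ Icc 1 (n + 1), (1 - qX ^ m) ^ 2) * (1 - Pcl * Tcl) ^ 2
              + Φ ((∏ m ∈ Icc 1 (n + 1), (1 - qX ^ m) ^ 2)
                  * ∑ m ∈ Icc 1 (n + 1), 2 * qX ^ m / (1 - qX ^ m)) * (1 - Pcl * Tcl) ^ 3))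
          - ((2 * (n + 1) : ℕ) : Aring)
            * (Φ s₂ * (Φ (qX ^ ((n + 1) * n))
              * (Φ (∏ m ∈ Icc 1 (n + 1), (1 - qX ^ m) ^ 2) * (1 - Pcl * Tcl) ^ 3)))
          + Φ s₃ * (Φ (qX ^ ((n + 1) * n))
            * (Φ (∏ m ∈ Icc 1 (n + 1), (1 - qX ^ m) ^ 2) * (1 - Pcl * Tcl) ^ 3)) := by
        simp only [map_mul]
        linear_combination (1 - Pcl * Tcl) ^ 2 * K1' + (1 - Pcl * Tcl) ^ 3 * K2'
    _ = Φ s₂ * (Φ (qX ^ ((n + 1) * n))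
            * ((1 - Pcl * Tcl) ^ 2
              * ∏ m ∈ Icc 1 (n + 1), (Φ (1 - qX ^ m) + Φ (qX ^ m) * (1 - Pcl)) ^ 2))
          - ((2 * (n + 1) : ℕ) : Aring)
            * (Φ s₂ * (Φ (qX ^ ((n + 1) * n))
              * ((1 - Pcl * Tcl) ^ 3
                * ∏ m ∈ Icc 1 (n + 1), (Φ (1 - qX ^ m) + Φ (qX ^ m) * (1 - Pcl)) ^ 2)))
          + Φ s₃ * (Φ (qX ^ ((n + 1) * n))
            * ((1 - Pcl * Tcl) ^ 3
              * ∏ m ∈ Icc 1 (n + 1), (Φ (1 - qX ^ m) + Φ (qX ^ m) * (1 - Pcl)) ^ 2)) := by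
        rw [e2, e3]
    _ = Φ s₂ * (Φ (qX ^ ((n + 1) * n))
            * (((1 - Pcl * Tcl) ^ 2 - ((2 * (n + 1) : ℕ) : Aring) * (1 - Pcl * Tcl) ^ 3)
              * ∏ m ∈ Icc 1 (n + 1), (Φ (1 - qX ^ m) + Φ (qX ^ m) * (1 - Pcl)) ^ 2))
          + Φ s₃ * (Φ (qX ^ ((n + 1) * n))
            * ((1 - Pcl * Tcl) ^ 3
              * ∏ m ∈ Icc 1 (n + 1), (Φ (1 - qX ^ m) + Φ (qX ^ m) * (1 - Pcl)) ^ 2)) := by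
        ring
    _ = Φ s₂ * (Φ (qX ^ ((n + 1) * n))
            * (((1 - Pcl * Tcl) ^ 2 * (Pcl * Tcl) ^ (2 * (n + 1)))
              * ∏ m ∈ Icc 1 (n + 1), (Φ (1 - qX ^ m) + Φ (qX ^ m) * (1 - Pcl)) ^ 2))
          + Φ s₃ * (Φ (qX ^ ((n + 1) * n))
            * (((1 - Pcl * Tcl) ^ 3 * (Pcl * Tcl) ^ (2 * (n + 1)))
              * ∏ m ∈ Icc 1 (n + 1), (Φ (1 - qX ^ m) + Φ (qX ^ m) * (1 - Pcl)) ^ 2)) := by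
        rw [hpow2, hpow3]
    _ = (Φ s₂ * (1 - Pcl * Tcl) ^ 2 + Φ s₃ * (1 - Pcl * Tcl) ^ 3)
        * ((Pcl * Tcl) ^ (2 * (n + 1)) * qcl ^ ((n + 1) * n)
          * ∏ m ∈ Icc 1 (n + 1), (Φ (1 - qX ^ m) + Φ (qX ^ m) * (1 - Pcl)) ^ 2) := by
        rw [hq2]; ring

private lemma K1_lemma (n : ℕ) :
    (∏ m ∈ Icc 1 n, ((1:Fq) - qX ^ m) ^ 2)
      = ((∑ i ∈ Icc 1 n, (i : Fq) * qX ^ (-(((n+1 : ℕ) : ℤ) * (((n+1 : ℕ) : ℤ) - (i : ℤ)))))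
          + (((n+1 : ℕ) : Fq) - 1) / (1 - qX ^ (n+1)) + 1 / (1 - qX ^ (n+1)) ^ 2)
        * (qX ^ ((n + 1) * n) * ∏ m ∈ Icc 1 (n + 1), ((1:Fq) - qX ^ m) ^ 2) := by
  have hX0 : (RatFunc.X : Fq) ≠ 0 := RatFunc.X_ne_zero
  have ht : (qX ^ (n+1) : Fq) ≠ 0 := pow_ne_zero _ hX0
  have h1t : (1 : Fq) - qX ^ (n+1) ≠ 0 := one_sub_X_pow_ne (n+1) (Nat.le_add_left 1 n)
  have hzp : ∀ i ∈ Icc 1 n, (qX : Fq) ^ (-(((n+1:ℕ):ℤ) * (((n+1:ℕ):ℤ) - (i:ℤ))))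
      = (qX ^ (n+1)) ^ i / (qX ^ (n+1)) ^ (n+1) := by
    intro i hi
    have he : (-(((n+1:ℕ):ℤ) * (((n+1:ℕ):ℤ) - (i:ℤ))))
        = ((((n+1) * i : ℕ)) : ℤ) - ((((n+1) * (n+1) : ℕ)) : ℤ) := by push_cast; ring
    rw [he, zpow_sub₀ hX0, zpow_natCast, zpow_natCast, pow_mul, pow_mul]
  have hsum1 : (∑ i ∈ Icc 1 n, (i:Fq) * qX ^ (-(((n+1:ℕ):ℤ) * (((n+1:ℕ):ℤ) - (i:ℤ)))))
      = (∑ i ∈ Icc 1 n, (i:Fq) * (qX ^ (n+1)) ^ i) / (qX ^ (n+1)) ^ (n+1) := by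
    rw [Finset.sum_div]
    exact Finset.sum_congr rfl fun i hi => by rw [hzp i hi, mul_div_assoc]
  have hS : (∑ i ∈ Icc 1 n, (i:Fq) * (qX ^ (n+1)) ^ i)
      = (qX ^ (n+1) - ((n:Fq)+1) * (qX ^ (n+1)) ^ (n+1) + (n:Fq) * (qX ^ (n+1)) ^ (n+2))
        / (1 - qX ^ (n+1)) ^ 2 := by
    rw [eq_div_iff (pow_ne_zero 2 h1t)]
    linear_combination sumA (qX ^ (n+1)) n
  rw [Finset.prod_Icc_succ_top (Nat.le_add_left 1 n), pow_mul, hsum1, hS]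
  push_cast
  field_simp
  ring


set_option maxHeartbeats 2000000 in
private lemma K2_lemma (n : ℕ) :
    (∏ m ∈ Icc 1 n, ((1:Fq) - qX ^ m) ^ 2)
        * ∑ m ∈ Icc 1 n, 2 * qX ^ m / (1 - qX ^ m)
      = ((∑ i ∈ Icc 1 n, (i : Fq) * qX ^ (-(((n+1 : ℕ) : ℤ) * (((n+1 : ℕ) : ℤ) - (i : ℤ)))))
            + (((n+1 : ℕ) : Fq) - 1) / (1 - qX ^ (n+1)) + 1 / (1 - qX ^ (n+1)) ^ 2)
          * (qX ^ ((n + 1) * n)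
            * ((∏ m ∈ Icc 1 (n + 1), ((1:Fq) - qX ^ m) ^ 2)
              * ∑ m ∈ Icc 1 (n + 1), 2 * qX ^ m / (1 - qX ^ m)))
        - ((2 * (n + 1) : ℕ) : Fq)
          * (((∑ i ∈ Icc 1 n, (i : Fq) * qX ^ (-(((n+1 : ℕ) : ℤ) * (((n+1 : ℕ) : ℤ) - (i : ℤ)))))
              + (((n+1 : ℕ) : Fq) - 1) / (1 - qX ^ (n+1)) + 1 / (1 - qX ^ (n+1)) ^ 2)
            * (qX ^ ((n + 1) * n) * ∏ m ∈ Icc 1 (n + 1), ((1:Fq) - qX ^ m) ^ 2))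
        + ((∑ i ∈ Icc 1 n,
              ((i : Fq) * (2 * ((n+1 : ℕ) : Fq) - (i : Fq) + 1))
                * qX ^ (-(((n+1 : ℕ) : ℤ) * (((n+1 : ℕ) : ℤ) - (i : ℤ)))))
            + ((((n+1 : ℕ) : Fq) - 1) / (1 - qX ^ (n+1)) + 1 / (1 - qX ^ (n+1)) ^ 2)
            + ((((n+1 : ℕ) : Fq) ^ 2 - 1) / (1 - qX ^ (n+1)) + 3 / (1 - qX ^ (n+1)) ^ 2
              - 2 / (1 - qX ^ (n+1)) ^ 3))
          * (qX ^ ((n + 1) * n) * ∏ m ∈ Icc 1 (n + 1), ((1:Fq) - qX ^ m) ^ 2) := by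
  have hX0 : (RatFunc.X : Fq) ≠ 0 := RatFunc.X_ne_zero
  have ht : (qX ^ (n+1) : Fq) ≠ 0 := pow_ne_zero _ hX0
  have h1t : (1 : Fq) - qX ^ (n+1) ≠ 0 := one_sub_X_pow_ne (n+1) (Nat.le_add_left 1 n)
  have hzp : ∀ i ∈ Icc 1 n, (qX : Fq) ^ (-(((n+1:ℕ):ℤ) * (((n+1:ℕ):ℤ) - (i:ℤ))))
      = (qX ^ (n+1)) ^ i / (qX ^ (n+1)) ^ (n+1) := by
    intro i hi
    have he : (-(((n+1:ℕ):ℤ) * (((n+1:ℕ):ℤ) - (i:ℤ))))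
        = ((((n+1) * i : ℕ)) : ℤ) - ((((n+1) * (n+1) : ℕ)) : ℤ) := by push_cast; ring
    rw [he, zpow_sub₀ hX0, zpow_natCast, zpow_natCast, pow_mul, pow_mul]
  have hsum1 : (∑ i ∈ Icc 1 n, (i:Fq) * qX ^ (-(((n+1:ℕ):ℤ) * (((n+1:ℕ):ℤ) - (i:ℤ)))))
      = (∑ i ∈ Icc 1 n, (i:Fq) * (qX ^ (n+1)) ^ i) / (qX ^ (n+1)) ^ (n+1) := by
    rw [Finset.sum_div]
    exact Finset.sum_congr rfl fun i hi => by rw [hzp i hi, mul_div_assoc]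
  have hsum2 : (∑ i ∈ Icc 1 n,
        ((i : Fq) * (2 * ((n+1 : ℕ) : Fq) - (i : Fq) + 1))
          * qX ^ (-(((n+1:ℕ):ℤ) * (((n+1:ℕ):ℤ) - (i:ℤ)))))
      = ((2 * ((n+1 : ℕ) : Fq) + 1) * (∑ i ∈ Icc 1 n, (i:Fq) * (qX ^ (n+1)) ^ i)
          - ∑ i ∈ Icc 1 n, (i:Fq) ^ 2 * (qX ^ (n+1)) ^ i) / (qX ^ (n+1)) ^ (n+1) := by
    rw [Finset.mul_sum, ← Finset.sum_sub_distrib, Finset.sum_div]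
    exact Finset.sum_congr rfl fun i hi => by
      rw [hzp i hi, ← mul_div_assoc]; congr 1; push_cast; ring
  have hS : (∑ i ∈ Icc 1 n, (i:Fq) * (qX ^ (n+1)) ^ i)
      = (qX ^ (n+1) - ((n:Fq)+1) * (qX ^ (n+1)) ^ (n+1) + (n:Fq) * (qX ^ (n+1)) ^ (n+2))
        / (1 - qX ^ (n+1)) ^ 2 := by
    rw [eq_div_iff (pow_ne_zero 2 h1t)]
    linear_combination sumA (qX ^ (n+1)) n
  have hU : (∑ i ∈ Icc 1 n, (i:Fq) ^ 2 * (qX ^ (n+1)) ^ i)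
      = (qX ^ (n+1) + (qX ^ (n+1)) ^ 2 - ((n:Fq)+1) ^ 2 * (qX ^ (n+1)) ^ (n+1)
          + (2 * (n:Fq) ^ 2 + 2 * (n:Fq) - 1) * (qX ^ (n+1)) ^ (n+2)
          - (n:Fq) ^ 2 * (qX ^ (n+1)) ^ (n+3))
        / (1 - qX ^ (n+1)) ^ 3 := by
    rw [eq_div_iff (pow_ne_zero 3 h1t)]
    linear_combination sumB (qX ^ (n+1)) n
  have r1 : (qX ^ (n+1)) ^ (n+1) * ((qX ^ (n+1)) ^ (n+1))⁻¹ = 1 :=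
    mul_inv_cancel₀ (pow_ne_zero _ ht)
  have r2 : (1 - qX ^ (n+1)) * (1 - qX ^ (n+1))⁻¹ = 1 := mul_inv_cancel₀ h1t
  have r3 : (1 - qX ^ (n+1)) ^ 2 * ((1 - qX ^ (n+1)) ^ 2)⁻¹ = 1 :=
    mul_inv_cancel₀ (pow_ne_zero 2 h1t)
  have r4 : (1 - qX ^ (n+1)) ^ 3 * ((1 - qX ^ (n+1)) ^ 3)⁻¹ = 1 :=
    mul_inv_cancel₀ (pow_ne_zero 3 h1t)
  have hs2 : ((∑ i ∈ Icc 1 n, (i : Fq) * qX ^ (-(((n+1 : ℕ) : ℤ) * (((n+1 : ℕ) : ℤ) - (i : ℤ)))))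
        + (((n+1 : ℕ) : Fq) - 1) / (1 - qX ^ (n+1)) + 1 / (1 - qX ^ (n+1)) ^ 2)
      * (qX ^ (n+1) * (qX ^ (n+1)) ^ n * (1 - qX ^ (n+1)) ^ 2) = qX ^ (n+1) := by
    rw [hsum1]
    push_cast
    linear_combination
      ((∑ i ∈ Icc 1 n, (i:Fq) * (qX ^ (n+1)) ^ i) * (1 - qX ^ (n+1)) ^ 2) * r1
      + ((n:Fq) * (qX ^ (n+1)) ^ (n+1) * (1 - qX ^ (n+1))) * r2
      + ((qX ^ (n+1)) ^ (n+1)) * r3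
      + sumA (qX ^ (n+1)) n
  have hs3 : ((∑ i ∈ Icc 1 n,
          ((i : Fq) * (2 * ((n+1 : ℕ) : Fq) - (i : Fq) + 1))
            * qX ^ (-(((n+1 : ℕ) : ℤ) * (((n+1 : ℕ) : ℤ) - (i : ℤ)))))
        + ((((n+1 : ℕ) : Fq) - 1) / (1 - qX ^ (n+1)) + 1 / (1 - qX ^ (n+1)) ^ 2)
        + ((((n+1 : ℕ) : Fq) ^ 2 - 1) / (1 - qX ^ (n+1)) + 3 / (1 - qX ^ (n+1)) ^ 2
          - 2 / (1 - qX ^ (n+1)) ^ 3))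
      * (qX ^ (n+1) * (qX ^ (n+1)) ^ n * (1 - qX ^ (n+1)) ^ 3)
      = 2 * (((n+1 : ℕ) : Fq)) * qX ^ (n+1) * (1 - qX ^ (n+1)) - 2 * (qX ^ (n+1)) ^ 2 := by
    rw [hsum2]
    push_cast
    linear_combination
      (((2 * ((n:Fq)+1) + 1) * (∑ i ∈ Icc 1 n, (i:Fq) * (qX ^ (n+1)) ^ i)
          - ∑ i ∈ Icc 1 n, (i:Fq) ^ 2 * (qX ^ (n+1)) ^ i) * (1 - qX ^ (n+1)) ^ 3) * r1
      + (((n:Fq) + ((n:Fq)+1) ^ 2 - 1) * (qX ^ (n+1)) ^ (n+1) * (1 - qX ^ (n+1)) ^ 2) * r2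
      + (4 * (qX ^ (n+1)) ^ (n+1) * (1 - qX ^ (n+1))) * r3
      + (-2 * (qX ^ (n+1)) ^ (n+1)) * r4
      + ((2 * ((n:Fq)+1) + 1) * (1 - qX ^ (n+1))) * sumA (qX ^ (n+1)) n
      - sumB (qX ^ (n+1)) n
  have hLr2 : (∑ m ∈ Icc 1 (n+1), 2 * qX ^ m / (1 - qX ^ m)) * (1 - qX ^ (n+1))
      = (∑ m ∈ Icc 1 n, 2 * qX ^ m / (1 - qX ^ m)) * (1 - qX ^ (n+1)) + 2 * qX ^ (n+1) := by
    rw [Finset.sum_Icc_succ_top (Nat.le_add_left 1 n), add_mul, div_mul_cancel₀ _ h1t]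
  refine mul_left_cancel₀ (mul_ne_zero ht h1t) ?_
  rw [Finset.prod_Icc_succ_top (Nat.le_add_left 1 n), pow_mul]
  push_cast at hs2 hs3 hLr2 ⊢
  linear_combination
    ((2 * ((n:Fq)+1)) * (∏ m ∈ Icc 1 n, ((1:Fq) - qX ^ m) ^ 2) * (1 - qX ^ (n+1))
        - (∏ m ∈ Icc 1 n, ((1:Fq) - qX ^ m) ^ 2) * (1 - qX ^ (n+1))
          * ∑ m ∈ Icc 1 (n+1), 2 * qX ^ m / (1 - qX ^ m)) * hs2
    - (∏ m ∈ Icc 1 n, ((1:Fq) - qX ^ m) ^ 2) * hs3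
    - (qX ^ (n+1) * ∏ m ∈ Icc 1 n, ((1:Fq) - qX ^ m) ^ 2) * hLr2

set_option maxHeartbeats 2000000 in
set_option synthInstance.maxHeartbeats 400000 in
/-- The degree-`r` coefficient of the specialized small `I`-function of
`Y_{−1,−1}` decomposes into a Laurent-polynomial part in `q` and pole parts
built from the multiple-cover functions `a(r, q^r)` and `b(r, q^r)`. -/
theorem stmt_12 (r : ℕ) (hr : 1 ≤ r) :
    IsUnit qcl ∧ IsUnit (Pcl * Tcl) ∧ IsUnit (1 - Pcl * qcl ^ r) ∧
      IsUnit (1 - (RatFunc.X : Fq) ^ r) ∧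
      (1 - Pcl * Tcl) ^ 2 * (∏ m ∈ Finset.Icc 1 (r - 1), (1 - Pcl * Tcl * qcl ^ m) ^ 2) *
          Ring.inverse
            ((Pcl * Tcl) ^ (2 * r) * qcl ^ (r * (r - 1)) *
              ∏ m ∈ Finset.Icc 1 r, (1 - Pcl * qcl ^ m) ^ 2) =
        algebraMap Fq Aring
            (∑ i ∈ Finset.Icc 1 (r - 1), (i : Fq) * (RatFunc.X : Fq) ^ (-(r * (r - i) : ℤ))) *
            (1 - Pcl * Tcl) ^ 2 +
          algebraMap Fq Aring
              (∑ i ∈ Finset.Icc 1 (r - 1),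
                ((i : Fq) * (2 * (r : Fq) - (i : Fq) + 1)) *
                  (RatFunc.X : Fq) ^ (-(r * (r - i) : ℤ))) *
            (1 - Pcl * Tcl) ^ 3 +
          algebraMap Fq Aring
              (((r : Fq) - 1) / (1 - (RatFunc.X : Fq) ^ r) +
                1 / (1 - (RatFunc.X : Fq) ^ r) ^ 2) *
            ((1 - Pcl * Tcl) ^ 2 + (1 - Pcl * Tcl) ^ 3) +
          algebraMap Fq Aring
              (((r : Fq) ^ 2 - 1) / (1 - (RatFunc.X : Fq) ^ r) +
                3 / (1 - (RatFunc.X : Fq) ^ r) ^ 2 -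
                2 / (1 - (RatFunc.X : Fq) ^ r) ^ 3) *
            (1 - Pcl * Tcl) ^ 3 := by
  obtain ⟨n, rfl⟩ : ∃ n, r = n + 1 := ⟨r - 1, (Nat.succ_pred_eq_of_pos hr).symm⟩
  simp only [Nat.add_sub_cancel]
  have hunit_q : IsUnit qcl :=
    (algebraMap Fq Aring).isUnit_map (isUnit_iff_ne_zero.mpr RatFunc.X_ne_zero)
  have hunit_PT : IsUnit (Pcl * Tcl) := by
    apply IsUnit.of_mul_eq_one
      (1 + (1 - Pcl * Tcl) + (1 - Pcl * Tcl) ^ 2 + (1 - Pcl * Tcl) ^ 3)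
    linear_combination -hv4
  refine ⟨hunit_q, hunit_PT, unit_one_sub_P_q (n+1) (Nat.le_add_left 1 n),
    isUnit_iff_ne_zero.mpr (one_sub_X_pow_ne (n+1) (Nat.le_add_left 1 n)), ?_⟩
  have hDunit : IsUnit ((Pcl * Tcl) ^ (2 * (n + 1)) * qcl ^ ((n + 1) * n) *
      ∏ m ∈ Icc 1 (n + 1), (1 - Pcl * qcl ^ m) ^ 2) := by
    refine ((hunit_PT.pow _).mul (hunit_q.pow _)).mul ?_
    exact Finset.prod_induction _ IsUnit (fun a b => IsUnit.mul) isUnit_one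
      (fun m hm => (unit_one_sub_P_q m (mem_Icc.mp hm).1).pow 2)
  have key := final_step n
    ((∑ i ∈ Icc 1 n, (i : Fq) * (RatFunc.X : Fq) ^ (-(((n+1 : ℕ) : ℤ) * (((n+1 : ℕ) : ℤ) - (i : ℤ)))))
      + (((n+1 : ℕ) : Fq) - 1) / (1 - (RatFunc.X : Fq) ^ (n+1))
      + 1 / (1 - (RatFunc.X : Fq) ^ (n+1)) ^ 2)
    ((∑ i ∈ Icc 1 n,
        ((i : Fq) * (2 * ((n+1 : ℕ) : Fq) - (i : Fq) + 1))
          * (RatFunc.X : Fq) ^ (-(((n+1 : ℕ) : ℤ) * (((n+1 : ℕ) : ℤ) - (i : ℤ)))))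
      + ((((n+1 : ℕ) : Fq) - 1) / (1 - (RatFunc.X : Fq) ^ (n+1))
        + 1 / (1 - (RatFunc.X : Fq) ^ (n+1)) ^ 2)
      + ((((n+1 : ℕ) : Fq) ^ 2 - 1) / (1 - (RatFunc.X : Fq) ^ (n+1))
        + 3 / (1 - (RatFunc.X : Fq) ^ (n+1)) ^ 2
        - 2 / (1 - (RatFunc.X : Fq) ^ (n+1)) ^ 3))
    (K1_lemma n) (K2_lemma n)
  rw [key, mul_assoc, Ring.mul_inverse_cancel _ hDunit, mul_one]
  simp only [map_add]
  ring
end
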